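/- arXiv:1811.08181 — 4 statements merged into one kernel-verified Lean document; each statement's English description precedes it below -/
import Mathlib

section
/- For every hypergraph H, ghw(H) = 1 if and only if hw(H) = 1. -/
/-- A hypergraph: a finite set of vertices and a finite set of nonempty edges,
each of which is a subset of the vertex set. -/
structure FinHypergraph (V : Type) where
  verts : Finset V
  edges : Finset (Finset V)
  nonempty_of_mem : ∀ e ∈ edges, e.Nonempty
  subset_verts : ∀ e ∈ edges, e ⊆ verts

variable {V : Type} [DecidableEq V]

/-- The data of a (generalized) hypertree decomposition: a finite rooted tree together
with a bag `B_u` and an (integral) edge labelling `λ_u` (given as the finite set of edges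
with value 1) for each node. -/
structure Decomp (V : Type) where
  n : ℕ
  tree : SimpleGraph (Fin n)
  root : Fin n
  bag : Fin n → Finset V
  cover : Fin n → Finset (Finset V)

/-- `u'` lies in the subtree `T_u` rooted at `u`: every path from the root to `u'`
passes through `u`. -/
def Decomp.desc (D : Decomp V) (u u' : Fin D.n) : Prop :=
  ∀ p : D.tree.Path D.root u', u ∈ p.1.support

/-- `D` is a generalized hypertree decomposition (GHD) of `H`:
the tree is a tree, every edge is covered by some bag, the set of nodes containing a
given vertex is connected in the tree, each `λ_u` uses only edges of `H`, and
`B_u ⊆ B(λ_u)`. -/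
def Decomp.IsGHD (H : FinHypergraph V) (D : Decomp V) : Prop :=
  D.tree.IsTree ∧
  (∀ e ∈ H.edges, ∃ u, e ⊆ D.bag u) ∧
  (∀ v : V, (D.tree.induce {u | v ∈ D.bag u}).Preconnected) ∧
  (∀ u, D.cover u ⊆ H.edges) ∧
  (∀ u, D.bag u ⊆ (D.cover u).biUnion id)

/-- `D` is a hypertree decomposition (HD) of `H`: a GHD satisfying in addition the
special condition `V(T_u) ∩ B(λ_u) ⊆ B_u` for every node `u`. -/
def Decomp.IsHD (H : FinHypergraph V) (D : Decomp V) : Prop :=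
  D.IsGHD H ∧
  ∀ u u', D.desc u u' → ∀ v ∈ D.bag u', v ∈ (D.cover u).biUnion id → v ∈ D.bag u

/-- The generalized hypertree width of `H`: the least `k` such that `H` has a GHD all of
whose labels `λ_u` have weight (cardinality) at most `k`. -/
noncomputable def ghw (H : FinHypergraph V) : ℕ :=
  sInf {k | ∃ D : Decomp V, D.IsGHD H ∧ ∀ u, (D.cover u).card ≤ k}

/-- The hypertree width of `H`: the least `k` such that `H` has an HD all of whose
labels `λ_u` have weight (cardinality) at most `k`. -/
noncomputable def hw (H : FinHypergraph V) : ℕ :=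
  sInf {k | ∃ D : Decomp V, D.IsHD H ∧ ∀ u, (D.cover u).card ≤ k}



/-- Parent-representation of a width-1 generalized hypertree decomposition of the
edge family `F`: nodes are `Fin (n+1)`, each nonzero node has a parent with smaller
index, each node has a bag contained in a single cover edge from `F`, every edge of
`F` is inside some bag, and bags satisfy the connectivity condition. -/
structure PDec (V : Type) [DecidableEq V] (F : Finset (Finset V)) (n : ℕ) where
  par : Fin (n+1) → Fin (n+1)
  hpar0 : par 0 = 0
  hpar : ∀ i, i ≠ 0 → par i < i
  bag : Fin (n+1) → Finset V
  cov : Fin (n+1) → Finset V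
  hcov : ∀ u, cov u ∈ F
  hsub : ∀ u, bag u ⊆ cov u
  hcover : ∀ e ∈ F, ∃ u, e ⊆ bag u
  hconn : ∀ (v : V) (i j : Fin (n+1)), v ∈ bag i → v ∈ bag j → j < i → v ∈ bag (par i)

namespace PDec

/-- single-node decomposition with full bag -/
def single {F : Finset (Finset V)} (e : Finset V) (he : e ∈ F) (hc : ∀ g ∈ F, g ⊆ e) :
    PDec V F 0 where
  par := fun _ => 0
  hpar0 := rfl
  hpar := fun i hi => absurd (Fin.fin_one_eq_zero i) hi
  bag := fun _ => e
  cov := fun _ => e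
  hcov := fun _ => he
  hsub := fun _ => le_refl _
  hcover := fun g hg => ⟨0, hc g hg⟩
  hconn := fun v i j _ _ hji => by
    rw [Fin.fin_one_eq_zero i, Fin.fin_one_eq_zero j] at hji
    exact absurd hji (lt_irrefl _)

/-- removing an "ear" `e` (an edge whose interaction with the rest lies inside `f`)
keeps a width-1 parent decomposition. -/
def shrink {F : Finset (Finset V)} {n : ℕ} (D : PDec V F n) (e f : Finset V)
    (hf : f ∈ F.erase e)
    (hear : ∀ v ∈ e, v ∈ (F.erase e).biUnion id → v ∈ f) :
    PDec V (F.erase e) n where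
  par := D.par
  hpar0 := D.hpar0
  hpar := D.hpar
  bag := fun u => D.bag u ∩ (F.erase e).biUnion id
  cov := fun u => if D.cov u = e then f else D.cov u
  hcov := fun u => by
    by_cases h : D.cov u = e
    · simp [h, hf]
    · simp [h, Finset.mem_erase, h, D.hcov u]
  hsub := fun u => by
    by_cases h : D.cov u = e
    · simp only [h, if_pos]
      intro v hv
      rw [Finset.mem_inter] at hv
      exact hear v (h ▸ D.hsub u hv.1) hv.2
    · simp only [h, if_neg, not_false_iff]
      exact (Finset.inter_subset_left).trans (D.hsub u)
  hcover := fun g hg => by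
    obtain ⟨u, hu⟩ := D.hcover g (Finset.mem_of_mem_erase hg)
    exact ⟨u, Finset.subset_inter hu (fun v hv => Finset.mem_biUnion.2 ⟨g, hg, hv⟩)⟩
  hconn := fun v i j hvi hvj hji => by
    rw [Finset.mem_inter] at hvi hvj ⊢
    exact ⟨D.hconn v i j hvi.1 hvj.1 hji, hvi.2⟩



/-- attach a new node with bag = cov = `e` to a join-tree for `F.erase e`. -/
lemma attach {F : Finset (Finset V)} {e f : Finset V} {n : ℕ} (D : PDec V (F.erase e) n)
    (hJT : ∀ u, D.bag u = D.cov u) (he : e ∈ F) (hf : f ∈ F.erase e)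
    (hear : ∀ v ∈ e, v ∈ (F.erase e).biUnion id → v ∈ f) :
    ∃ E : PDec V F (n+1), ∀ u, E.bag u = E.cov u := by
  obtain ⟨z, hz⟩ := D.hcover f hf
  refine ⟨⟨Fin.lastCases z.castSucc (fun u => (D.par u).castSucc), ?_, ?_,
      Fin.lastCases e (fun u => D.bag u), Fin.lastCases e (fun u => D.cov u),
      ?_, ?_, ?_, ?_⟩, ?_⟩
  · have h0 : (0 : Fin (n+2)) = Fin.castSucc 0 := by simp
    rw [h0]; simp only [Fin.lastCases_castSucc]; rw [D.hpar0]
  · intro i hi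
    induction i using Fin.lastCases with
    | last => simp only [Fin.lastCases_last]; exact Fin.castSucc_lt_last _
    | cast u =>
      simp only [Fin.lastCases_castSucc]
      have hu : u ≠ 0 := fun h => hi (by simp [h])
      exact Fin.castSucc_lt_castSucc_iff.2 (D.hpar u hu)
  · intro u
    induction u using Fin.lastCases with
    | last => simp only [Fin.lastCases_last]; exact he
    | cast u => simp only [Fin.lastCases_castSucc]; exact Finset.mem_of_mem_erase (D.hcov u)
  · intro u
    induction u using Fin.lastCases with
    | last => simp only [Fin.lastCases_last]; exact subset_rfl
    | cast u => simp only [Fin.lastCases_castSucc]; exact D.hsub u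
  · intro g hg
    by_cases hge : g = e
    · exact ⟨Fin.last _, by simp only [Fin.lastCases_last]; exact hge ▸ subset_rfl⟩
    · obtain ⟨u, hu⟩ := D.hcover g (Finset.mem_erase.2 ⟨hge, hg⟩)
      exact ⟨u.castSucc, by simp only [Fin.lastCases_castSucc]; exact hu⟩
  · intro v i j hvi hvj hji
    induction i using Fin.lastCases with
    | last =>
      simp only [Fin.lastCases_last] at hvi ⊢
      obtain ⟨w, rfl⟩ := Fin.exists_castSucc_eq.2 (Fin.lt_last_iff_ne_last.1 hji)
      simp only [Fin.lastCases_castSucc] at hvj ⊢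
      have hvU : v ∈ (F.erase e).biUnion id :=
        Finset.mem_biUnion.2 ⟨D.cov w, D.hcov w, D.hsub w hvj⟩
      exact hz (hear v hvi hvU)
    | cast u =>
      have hjlt : j < Fin.last (n+1) := lt_trans hji (Fin.castSucc_lt_last u)
      obtain ⟨w, rfl⟩ := Fin.exists_castSucc_eq.2 (Fin.lt_last_iff_ne_last.1 hjlt)
      simp only [Fin.lastCases_castSucc] at hvi hvj ⊢
      exact D.hconn v u w hvi hvj (Fin.castSucc_lt_castSucc_iff.1 hji)
  · intro u
    induction u using Fin.lastCases with
    | last => simp only [Fin.lastCases_last]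
    | cast u => simp only [Fin.lastCases_castSucc]; exact hJT u



variable {F : Finset (Finset V)} {n : ℕ}

lemma parlt (D : PDec V F (n+1)) (i : Fin (n+1)) : (D.par i.castSucc).val < n + 1 := by
  by_cases h : i.castSucc = 0
  · rw [h, D.hpar0]; exact Nat.succ_pos n
  · have := D.hpar _ h
    have h2 : (D.par i.castSucc).val < i.castSucc.val := this
    have h3 : (i.castSucc).val < n + 1 := by
      exact i.isLt
    omega

/-- delete the last node, assuming every edge covered there is covered elsewhere too. -/
lemma delete (D : PDec V F (n+1))
    (hdel : ∀ e ∈ F, e ⊆ D.bag (Fin.last (n+1)) → ∃ u, u ≠ Fin.last (n+1) ∧ e ⊆ D.bag u) :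
    Nonempty (PDec V F n) := by
  refine ⟨⟨fun i => ⟨(D.par i.castSucc).val, D.parlt i⟩, ?_, ?_,
      fun i => D.bag i.castSucc, fun i => D.cov i.castSucc,
      fun i => D.hcov _, fun i => D.hsub _, ?_, ?_⟩⟩
  · apply Fin.ext
    show (D.par (Fin.castSucc 0)).val = _
    rw [Fin.castSucc_zero, D.hpar0]; simp
  · intro i hi
    have hi' : i.castSucc ≠ 0 := fun h => hi (by simpa [Fin.castSucc_eq_zero_iff] using h)
    exact D.hpar _ hi'
  · intro e he
    obtain ⟨u, hu⟩ := D.hcover e he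
    by_cases hu' : u = Fin.last (n+1)
    · obtain ⟨w, hw, hw2⟩ := hdel e he (hu' ▸ hu)
      obtain ⟨w', rfl⟩ := Fin.exists_castSucc_eq.2 hw
      exact ⟨w', hw2⟩
    · obtain ⟨w', rfl⟩ := Fin.exists_castSucc_eq.2 hu'
      exact ⟨w', hu⟩
  · intro v i j hvi hvj hji
    have h : v ∈ D.bag (D.par i.castSucc) :=
      D.hconn v i.castSucc j.castSucc hvi hvj (Fin.castSucc_lt_castSucc_iff.2 hji)
    have hEq : Fin.castSucc (⟨(D.par i.castSucc).val, D.parlt i⟩ : Fin (n+1)) = D.par i.castSucc :=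
      Fin.ext rfl
    show v ∈ D.bag (Fin.castSucc _)
    rw [hEq]
    exact h

/-- contract the last node (a leaf) into its parent, when they have the same cover. -/
lemma contract (D : PDec V F (n+1))
    (hsame : D.cov (D.par (Fin.last (n+1))) = D.cov (Fin.last (n+1))) :
    Nonempty (PDec V F n) := by
  set ℓ : Fin (n+2) := Fin.last (n+1) with hℓ
  set p : Fin (n+2) := D.par ℓ with hp
  have hℓ0 : ℓ ≠ 0 := by
    simp [hℓ, Fin.ext_iff]
  have hpℓ : p < ℓ := D.hpar ℓ hℓ0
  refine ⟨⟨fun i => ⟨(D.par i.castSucc).val, D.parlt i⟩, ?_, ?_,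
      fun i => if i.castSucc = p then D.bag p ∪ D.bag ℓ else D.bag i.castSucc,
      fun i => D.cov i.castSucc,
      fun i => D.hcov _, ?_, ?_, ?_⟩⟩
  · apply Fin.ext
    show (D.par (Fin.castSucc 0)).val = _
    rw [Fin.castSucc_zero, D.hpar0]; simp
  · intro i hi
    have hi' : i.castSucc ≠ 0 := fun h => hi (by simpa [Fin.castSucc_eq_zero_iff] using h)
    exact D.hpar _ hi'
  · intro i
    by_cases h : i.castSucc = p
    · simp only [h, if_pos]
      exact Finset.union_subset (D.hsub p) (hsame ▸ D.hsub ℓ)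
    · simp only [h, if_neg, not_false_iff]
      exact D.hsub _
  · intro e he
    obtain ⟨u, hu⟩ := D.hcover e he
    by_cases hu' : u = ℓ
    · have hpv : p.val < n + 1 := by
        have := hpℓ
        have h2 : ℓ.val = n + 1 := rfl
        omega
      refine ⟨⟨p.val, hpv⟩, ?_⟩
      have hc : (Fin.castSucc (⟨p.val, hpv⟩ : Fin (n+1))) = p := by
        apply Fin.ext; rfl
      simp only [hc, eq_self_iff_true, if_true]
      exact (hu'.subst (motive := fun x => e ⊆ D.bag x) hu).trans Finset.subset_union_right
    · obtain ⟨w', rfl⟩ := Fin.exists_castSucc_eq.2 hu'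
      refine ⟨w', ?_⟩
      by_cases h : Fin.castSucc w' = p
      · simp only [h, if_pos]
        exact (show e ⊆ D.bag p from h ▸ hu).trans Finset.subset_union_left
      · simp only [h, if_neg, not_false_iff]
        exact hu
  · intro v i j hvi hvj hji
    set q : Fin (n+2) := D.par i.castSucc with hq
    have hEq : Fin.castSucc (⟨(D.par i.castSucc).val, D.parlt i⟩ : Fin (n+1)) = q :=
      Fin.ext rfl
    have goalsuff : v ∈ D.bag q ∨ (q = p ∧ v ∈ D.bag ℓ) →
        v ∈ (fun i => if i.castSucc = p then D.bag p ∪ D.bag ℓ else D.bag i.castSucc)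
          (⟨(D.par i.castSucc).val, D.parlt i⟩ : Fin (n+1)) := by
      intro hcase
      show v ∈ if Fin.castSucc (⟨(D.par i.castSucc).val, D.parlt i⟩ : Fin (n+1)) = p
        then D.bag p ∪ D.bag ℓ else D.bag (Fin.castSucc ⟨(D.par i.castSucc).val, D.parlt i⟩)
      rw [hEq]
      by_cases hqp : q = p
      · rw [if_pos hqp]
        rcases hcase with h | ⟨_, h⟩
        · exact Finset.mem_union_left _ (hqp ▸ h)
        · exact Finset.mem_union_right _ h
      · rw [if_neg hqp]
        rcases hcase with h | ⟨h, _⟩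
        · exact h
        · exact absurd h hqp
    apply goalsuff
    have hvi' : v ∈ D.bag i.castSucc ∨ (i.castSucc = p ∧ v ∈ D.bag ℓ) := by
      by_cases h : i.castSucc = p
      · simp only [h, eq_self_iff_true, if_true] at hvi
        rcases Finset.mem_union.1 hvi with h' | h'
        · exact Or.inl (h ▸ h')
        · exact Or.inr ⟨h, h'⟩
      · simp only [h, if_neg, not_false_iff] at hvi
        exact Or.inl hvi
    have hvj' : v ∈ D.bag j.castSucc ∨ (j.castSucc = p ∧ v ∈ D.bag ℓ) := by
      by_cases h : j.castSucc = p
      · simp only [h, eq_self_iff_true, if_true] at hvj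
        rcases Finset.mem_union.1 hvj with h' | h'
        · exact Or.inl (h ▸ h')
        · exact Or.inr ⟨h, h'⟩
      · simp only [h, if_neg, not_false_iff] at hvj
        exact Or.inl hvj
    have hji' : j.castSucc < i.castSucc := Fin.castSucc_lt_castSucc_iff.2 hji
    have hiℓ : i.castSucc < ℓ := Fin.castSucc_lt_last i
    rcases hvi' with hvi2 | ⟨hip, hvℓ⟩
    · rcases hvj' with hvj2 | ⟨hjp, hvℓ⟩
      · exact Or.inl (D.hconn v i.castSucc j.castSucc hvi2 hvj2 hji')
      · have hbp : v ∈ D.bag p := D.hconn v ℓ i.castSucc hvℓ hvi2 hiℓ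
        exact Or.inl (D.hconn v i.castSucc p hvi2 hbp (hjp ▸ hji'))
    · rcases hvj' with hvj2 | ⟨hjp, _⟩
      · have hxp : j.castSucc < p := hip ▸ hji'
        have hbp : v ∈ D.bag p := D.hconn v ℓ j.castSucc hvℓ hvj2 (lt_trans hxp hpℓ)
        have : v ∈ D.bag (D.par p) := D.hconn v p j.castSucc hbp hvj2 hxp
        exact Or.inl (by rw [hq, hip]; exact this)
      · exact absurd (hjp.trans hip.symm) (ne_of_lt hji')


-- main induction, to be appended inside namespace PDec
lemma exists_JT : ∀ (k : ℕ) (F : Finset (Finset V)) (n : ℕ) (D : PDec V F n),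
    F.Nonempty → n + 1 + F.card ≤ k → ∃ m, ∃ E : PDec V F m, ∀ u, E.bag u = E.cov u := by
  intro k
  induction k with
  | zero => intro F n D hF hle; omega
  | succ k IH =>
    intro F n D hF hk
    have hFcard : 1 ≤ F.card := Finset.card_pos.2 hF
    have ears : ∀ (e f : Finset V), e ∈ F → f ∈ F.erase e →
        (∀ v ∈ e, v ∈ (F.erase e).biUnion id → v ∈ f) →
        ∃ m, ∃ E : PDec V F m, ∀ u, E.bag u = E.cov u := by
      intro e f he hf hear
      have D' := D.shrink e f hf hear
      have hcard : (F.erase e).card = F.card - 1 := Finset.card_erase_of_mem he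
      obtain ⟨m, E, hE⟩ := IH (F.erase e) n D' ⟨f, hf⟩ (by omega)
      obtain ⟨E2, hE2⟩ := E.attach hE he hf hear
      exact ⟨m+1, E2, hE2⟩
    by_cases hB : ∀ e ∈ F, e ⊆ D.bag (Fin.last n) → ∃ u, u ≠ Fin.last n ∧ e ⊆ D.bag u
    · match n, D, hk, hB with
      | 0, D, hk, hB =>
        exfalso
        obtain ⟨e, he⟩ := hF
        obtain ⟨u, hu⟩ := D.hcover e he
        have hu0 : u = Fin.last 0 := Fin.fin_one_eq_zero u
        obtain ⟨u', hu', _⟩ := hB e he (hu0 ▸ hu)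
        exact hu' (Fin.fin_one_eq_zero u')
      | (m+1), D, hk, hB =>
        obtain ⟨D'⟩ := D.delete hB
        exact IH F m D' hF (by omega)
    · push_neg at hB
      obtain ⟨e, he, heℓ, honly⟩ := hB
      by_cases hA1 : ∃ g ∈ F, g ≠ e ∧ g ⊆ e
      · obtain ⟨g, hg, hgne, hge⟩ := hA1
        exact ears g e hg (Finset.mem_erase.2 ⟨hgne.symm, he⟩) (fun v hv _ => hge hv)
      · by_cases hcovℓ : D.cov (Fin.last n) = e
        · match n, D, hk, heℓ, honly, hcovℓ with
          | 0, D, hk, heℓ, honly, hcovℓ =>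
            have hc : ∀ g ∈ F, g ⊆ e := by
              intro g hg
              obtain ⟨u, hu⟩ := D.hcover g hg
              have : u = Fin.last 0 := Fin.fin_one_eq_zero u
              exact ((this ▸ hu).trans (D.hsub (Fin.last 0))).trans (le_of_eq hcovℓ)
            exact ⟨0, PDec.single e he hc, fun _ => rfl⟩
          | (m+1), D, hk, heℓ, honly, hcovℓ =>
            by_cases hcovp : D.cov (D.par (Fin.last (m+1))) = e
            · obtain ⟨D'⟩ := D.contract (hcovp.trans hcovℓ.symm)
              exact IH F m D' hF (by omega)
            · refine ears e (D.cov (D.par (Fin.last (m+1)))) he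
                (Finset.mem_erase.2 ⟨hcovp, D.hcov _⟩) ?_
              intro v hv hvU
              obtain ⟨g, hgmem, hvg⟩ := Finset.mem_biUnion.1 hvU
              have hgF : g ∈ F := Finset.mem_of_mem_erase hgmem
              have hgne : g ≠ e := (Finset.mem_erase.1 hgmem).1
              obtain ⟨w, hw⟩ := D.hcover g hgF
              have hwℓ : w ≠ Fin.last (m+1) := by
                intro hweq
                exact hA1 ⟨g, hgF, hgne,
                  ((hweq ▸ hw).trans (D.hsub (Fin.last (m+1)))).trans (le_of_eq hcovℓ)⟩
              have hwlt : w < Fin.last (m+1) := Fin.lt_last_iff_ne_last.2 hwℓ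
              exact D.hsub _ (D.hconn v (Fin.last (m+1)) w (heℓ hv) (hw hvg) hwlt)
        · refine ears e (D.cov (Fin.last n)) he
            (Finset.mem_erase.2 ⟨hcovℓ, D.hcov _⟩) ?_
          intro v hv _
          exact D.hsub _ (heℓ hv)

end PDec


/-- the graph of a parent function -/
def pGraph (n : ℕ) (par : Fin (n+1) → Fin (n+1)) (hpar : ∀ i, i ≠ 0 → par i < i) :
    SimpleGraph (Fin (n+1)) where
  Adj i j := (i ≠ 0 ∧ j = par i) ∨ (j ≠ 0 ∧ i = par j)
  symm := ⟨fun i j h => h.symm.imp (fun h => h) (fun h => h)⟩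
  loopless := ⟨fun i h => by
    rcases h with ⟨h1, h2⟩ | ⟨h1, h2⟩ <;>
    · have := hpar i h1
      rw [← h2] at this
      exact absurd this (lt_irrefl i)⟩

namespace pGraph

variable {n : ℕ} {par : Fin (n+1) → Fin (n+1)} {hpar : ∀ i, i ≠ 0 → par i < i}

lemma adj_par {i : Fin (n+1)} (hi : i ≠ 0) : (pGraph n par hpar).Adj i (par i) :=
  Or.inl ⟨hi, rfl⟩

lemma reach0 : ∀ i : Fin (n+1), (pGraph n par hpar).Reachable i 0 := by
  have key : ∀ (k : ℕ) (i : Fin (n+1)), i.val ≤ k → (pGraph n par hpar).Reachable i 0 := by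
    intro k
    induction k with
    | zero => intro i hi; rw [show i = 0 from Fin.ext (Nat.le_zero.1 hi)]
    | succ k IH =>
      intro i hi
      by_cases h0 : i = 0
      · rw [h0]
      · have h1 := hpar i h0
        exact ((adj_par h0).reachable).trans (IH (par i) (by omega))
  exact fun i => key i.val i le_rfl

lemma connected : (pGraph n par hpar).Connected := by
  rw [SimpleGraph.connected_iff]
  exact ⟨fun a b => (reach0 a).trans (reach0 b).symm, ⟨0⟩⟩

lemma acyclic : (pGraph n par hpar).IsAcyclic := by
  intro x c hc
  have hnil : c.support ≠ [] := c.support_ne_nil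
  set s := c.support.toFinset with hs
  have hsne : s.Nonempty := by
    rw [hs]
    exact ⟨x, by simp [SimpleGraph.Walk.start_mem_support]⟩
  set m := s.max' hsne with hm
  have hmax : ∀ a ∈ c.support, a ≤ m := fun a ha => s.le_max' a (by simp [hs, ha])
  have hmem : m ∈ c.support := by
    have := s.max'_mem hsne
    simpa [hs] using this
  have hc' : (c.rotate m hmem).IsCycle := hc.rotate hmem
  have hsup : ∀ a, a ∈ (c.rotate m hmem).support → a ≤ m := by
    intro a ha
    rw [SimpleGraph.Walk.support_eq_cons] at ha
    rcases List.mem_cons.1 ha with rfl | ha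
    · exact le_rfl
    · have hperm := SimpleGraph.Walk.support_rotate c m hmem
      have := hperm.mem_iff.1 ha
      exact hmax a (List.mem_of_mem_tail this)
  -- destruct first edge
  obtain ⟨b, hadj, q, heq⟩ := SimpleGraph.Walk.not_nil_iff.1 hc'.not_nil
  rw [heq] at hc' hsup
  clear heq
  · have hbsup : b ∈ (SimpleGraph.Walk.cons hadj q).support := by
      simp [SimpleGraph.Walk.support_cons, SimpleGraph.Walk.start_mem_support]
    have hbm : b = par m := by
      rcases hadj with ⟨h1, h2⟩ | ⟨h1, h2⟩
      · exact h2
      · exfalso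
        have := hpar b h1
        rw [← h2] at this
        exact absurd (lt_of_lt_of_le this (hsup b hbsup)) (lt_irrefl _)
    -- destruct last edge via reverse
    have hrev : (SimpleGraph.Walk.cons hadj q).reverse.edges
        = (SimpleGraph.Walk.cons hadj q).edges.reverse :=
      SimpleGraph.Walk.edges_reverse _
    have hrnn : ¬ (SimpleGraph.Walk.cons hadj q).reverse.Nil := by
      rw [SimpleGraph.Walk.nil_iff_length_eq, SimpleGraph.Walk.length_reverse]
      simp
    obtain ⟨d, hadj', q', hr⟩ := SimpleGraph.Walk.not_nil_iff.1 hrnn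
    · have hdsup : d ∈ (SimpleGraph.Walk.cons hadj q).support := by
        have : d ∈ (SimpleGraph.Walk.cons hadj q).reverse.support := by
          rw [hr]
          simp [SimpleGraph.Walk.support_cons, SimpleGraph.Walk.start_mem_support]
        rwa [SimpleGraph.Walk.support_reverse, List.mem_reverse] at this
      have hdm : d = par m := by
        rcases hadj' with ⟨h1, h2⟩ | ⟨h1, h2⟩
        · exact h2
        · exfalso
          have := hpar d h1
          rw [← h2] at this
          exact absurd (lt_of_lt_of_le this (hsup d hdsup)) (lt_irrefl _)
      -- edges contradiction
      have hlen : 3 ≤ (SimpleGraph.Walk.cons hadj q).length := hc'.three_le_length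
      have hqlen : 2 ≤ q.edges.length := by
        rw [SimpleGraph.Walk.length_edges]
        simp only [SimpleGraph.Walk.length_cons] at hlen
        omega
      have hqne : q.edges ≠ [] := by
        intro h
        rw [h] at hqlen
        simp at hqlen
      have hedges : (SimpleGraph.Walk.cons hadj q).edges = s(m, b) :: q.edges := rfl
      have hnodup : ((SimpleGraph.Walk.cons hadj q).edges).Nodup := hc'.edges_nodup
      rw [hedges, List.nodup_cons] at hnodup
      have hlast : (SimpleGraph.Walk.cons hadj q).edges.getLast? = some s(m, d) := by
        have h1 : (SimpleGraph.Walk.cons hadj q).reverse.edges = s(m, d) :: q'.edges := by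
          rw [hr]; rfl
        rw [hrev] at h1
        have h2 := List.head?_reverse (l := (SimpleGraph.Walk.cons hadj q).edges)
        rw [h1] at h2
        simpa using h2.symm
      have hlast2 : s(m, d) ∈ q.edges := by
        rw [hedges] at hlast
        have h3 : q.edges.getLast? = some s(m, d) := by
          cases hqe : q.edges with
          | nil => exact absurd hqe hqne
          | cons b t => rw [hqe, List.getLast?_cons_cons] at hlast; exact hlast
        have h4 := List.getLast?_eq_getLast (l := q.edges) (h := hqne)
        rw [h4] at h3
        exact (Option.some_inj.1 h3) ▸ List.getLast_mem _
      have hbd : s(m, b) = s(m, d) := by rw [hbm, hdm]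
      exact hnodup.1 (hbd ▸ hlast2)

lemma isTree : (pGraph n par hpar).IsTree := by
  rw [SimpleGraph.isTree_iff]
  exact ⟨connected, acyclic⟩

lemma induce_preconnected (S : Set (Fin (n+1)))
    (hS : ∀ i j, i ∈ S → j ∈ S → j < i → par i ∈ S) :
    ((pGraph n par hpar).induce S).Preconnected := by
  have key : ∀ (k : ℕ) (x y : ↥S), x.val.val + y.val.val ≤ k →
      ((pGraph n par hpar).induce S).Reachable x y := by
    intro k
    induction k with
    | zero =>
      intro x y hxy
      have : x = y := by
        apply Subtype.ext; apply Fin.ext; omega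
      rw [this]
    | succ k IH =>
      intro x y hxy
      rcases lt_trichotomy (x : Fin (n+1)) (y : Fin (n+1)) with h | h | h
      · -- y > x : step y down
        have hy0 : (y : Fin (n+1)) ≠ 0 := by
          intro h0
          rw [h0] at h
          exact absurd h (by simp [Fin.lt_iff_val_lt_val])
        have hpy : par y ∈ S := hS y x y.2 x.2 h
        have hadj : ((pGraph n par hpar).induce S).Adj y ⟨par y, hpy⟩ :=
          pGraph.adj_par (hpar := hpar) hy0
        have hlt : (par (y : Fin (n+1))).val < (y : Fin (n+1)).val := hpar _ hy0
        have hco : ((⟨par (y : Fin (n+1)), hpy⟩ : ↥S) : Fin (n+1)).val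
            = (par (y : Fin (n+1))).val := rfl
        have := IH x ⟨par y, hpy⟩ (by omega)
        exact (this.trans hadj.reachable.symm)
      · exact (Subtype.ext h) ▸ SimpleGraph.Reachable.refl _
      · have hx0 : (x : Fin (n+1)) ≠ 0 := by
          intro h0
          rw [h0] at h
          exact absurd h (by simp [Fin.lt_iff_val_lt_val])
        have hpx : par x ∈ S := hS x y x.2 y.2 h
        have hadj : ((pGraph n par hpar).induce S).Adj x ⟨par x, hpx⟩ :=
          pGraph.adj_par (hpar := hpar) hx0
        have hlt : (par (x : Fin (n+1))).val < (x : Fin (n+1)).val := hpar _ hx0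
        have hco : ((⟨par (x : Fin (n+1)), hpx⟩ : ↥S) : Fin (n+1)).val
            = (par (x : Fin (n+1))).val := rfl
        have := IH ⟨par x, hpx⟩ y (by omega)
        exact hadj.reachable.trans this
  exact fun x y => key (x.val.val + y.val.val) x y le_rfl

end pGraph

section TreeAux
open SimpleGraph

variable {W : Type} [DecidableEq W] {G : SimpleGraph W} {r : W}

lemma mem_dist_split {c x : W} (p : G.Walk r c) (hx : x ∈ p.support) :
    G.dist r x + G.dist x c ≤ p.length := by
  have hspec := p.take_spec hx
  have hlen : (p.takeUntil x hx).length + (p.dropUntil x hx).length = p.length := by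
    have := congrArg SimpleGraph.Walk.length hspec
    rwa [SimpleGraph.Walk.length_append] at this
  have h1 : G.dist r x ≤ (p.takeUntil x hx).length := SimpleGraph.dist_le _
  have h2 : G.dist x c ≤ (p.dropUntil x hx).length := SimpleGraph.dist_le _
  omega

/-- a path of length dist -/
lemma exists_path_dist (hc : G.Connected) (x : W) :
    ∃ p : G.Walk r x, p.IsPath ∧ p.length = G.dist r x := by
  obtain ⟨w, hw⟩ := hc.exists_walk_length_eq_dist r x
  refine ⟨w.bypass, w.bypass_isPath, le_antisymm ?_ ?_⟩
  · exact hw ▸ w.length_bypass_le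
  · exact SimpleGraph.dist_le _

/-- adjacent vertices have different distances from the root in a tree -/
lemma adj_dist_ne (hT : G.IsTree) {x c : W} (h : G.Adj x c) :
    G.dist r x ≠ G.dist r c := by
  have hc : G.Connected := hT.isConnected
  intro hd
  obtain ⟨px, hpx, hlx⟩ := exists_path_dist (r := r) hc x
  obtain ⟨pc, hpc, hlc⟩ := exists_path_dist (r := r) hc c
  have hxnc : x ∉ pc.support := by
    intro hmem
    have := mem_dist_split pc hmem
    have h1 : 0 < G.dist x c := hc.pos_dist_of_ne h.ne
    omega
  have hq2 : (SimpleGraph.Walk.cons h pc.reverse).IsPath := by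
    rw [SimpleGraph.Walk.cons_isPath_iff]
    exact ⟨hpc.reverse, by rwa [SimpleGraph.Walk.support_reverse, List.mem_reverse]⟩
  have huniq := SimpleGraph.isAcyclic_iff_path_unique.1 hT.IsAcyclic
    (⟨px.reverse, hpx.reverse⟩ : G.Path x r)
    (⟨SimpleGraph.Walk.cons h pc.reverse, hq2⟩ : G.Path x r)
  have := congrArg (fun (p : G.Path x r) => p.1.length) huniq
  simp only [SimpleGraph.Walk.length_reverse, SimpleGraph.Walk.length_cons] at this
  omega

/-- uniqueness of the distance-decreasing neighbour in a tree -/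
lemma dec_neighbor_unique (hT : G.IsTree) {x z1 z2 : W}
    (h1 : G.Adj x z1) (h2 : G.Adj x z2)
    (hd1 : G.dist r z1 < G.dist r x) (hd2 : G.dist r z2 < G.dist r x) : z1 = z2 := by
  have hc : G.Connected := hT.isConnected
  obtain ⟨p1, hp1, hl1⟩ := exists_path_dist (r := r) hc z1
  obtain ⟨p2, hp2, hl2⟩ := exists_path_dist (r := r) hc z2
  have key : ∀ {z : W} (h : G.Adj x z), G.dist r z < G.dist r x →
      ∀ (p : G.Walk r z), p.IsPath → p.length = G.dist r z → x ∉ p.support := by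
    intro z h hd p hp hl hmem
    have := mem_dist_split p hmem
    have h1' : 0 < G.dist x z := hc.pos_dist_of_ne h.ne
    have htri : G.dist r x ≤ G.dist r z + G.dist z x := hc.dist_triangle
    have hzx : G.dist z x ≤ 1 := by
      have := SimpleGraph.dist_le (h.symm.toWalk)
      simpa using this
    omega
  have hx1 : x ∉ p1.support := key h1 hd1 p1 hp1 hl1
  have hx2 : x ∉ p2.support := key h2 hd2 p2 hp2 hl2
  have hq1 : (SimpleGraph.Walk.cons h1 p1.reverse).IsPath := by
    rw [SimpleGraph.Walk.cons_isPath_iff]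
    exact ⟨hp1.reverse, by rwa [SimpleGraph.Walk.support_reverse, List.mem_reverse]⟩
  have hq2 : (SimpleGraph.Walk.cons h2 p2.reverse).IsPath := by
    rw [SimpleGraph.Walk.cons_isPath_iff]
    exact ⟨hp2.reverse, by rwa [SimpleGraph.Walk.support_reverse, List.mem_reverse]⟩
  have huniq := SimpleGraph.isAcyclic_iff_path_unique.1 hT.IsAcyclic
    (⟨SimpleGraph.Walk.cons h1 p1.reverse, hq1⟩ : G.Path x r)
    (⟨SimpleGraph.Walk.cons h2 p2.reverse, hq2⟩ : G.Path x r)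
  have hsup := congrArg (fun (p : G.Path x r) => p.1.support) huniq
  simp only [SimpleGraph.Walk.support_cons] at hsup
  have ht := List.tail_eq_of_cons_eq hsup
  have e1 : p1.reverse.support = z1 :: p1.reverse.support.tail :=
    SimpleGraph.Walk.support_eq_cons _
  have e2 : p2.reverse.support = z2 :: p2.reverse.support.tail :=
    SimpleGraph.Walk.support_eq_cons _
  rw [e1, e2] at ht
  exact List.head_eq_of_cons_eq ht

/-- existence of a distance-decreasing neighbour -/
lemma dec_neighbor_exists (hc : G.Connected) {x : W} (hx : x ≠ r) :
    ∃ y, G.Adj x y ∧ G.dist r y + 1 = G.dist r x := by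
  obtain ⟨w, hw⟩ := hc.exists_walk_length_eq_dist r x
  have hpos : 0 < w.length := by
    rw [hw]
    exact hc.pos_dist_of_ne (Ne.symm hx)
  have hrnn : ¬ w.reverse.Nil := by
    rw [SimpleGraph.Walk.nil_iff_length_eq, SimpleGraph.Walk.length_reverse]
    omega
  obtain ⟨y, hadj, q, hq⟩ := SimpleGraph.Walk.not_nil_iff.1 hrnn
  have hlq : q.length + 1 = G.dist r x := by
    have := congrArg SimpleGraph.Walk.length hq
    rw [SimpleGraph.Walk.length_reverse, SimpleGraph.Walk.length_cons] at this
    omega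
  have hdy : G.dist r y ≤ q.length := by
    rw [SimpleGraph.dist_comm]
    exact SimpleGraph.dist_le q
  have htri : G.dist r x ≤ G.dist r y + 1 := by
    have h1 : G.dist r x ≤ G.dist r y + G.dist y x := hc.dist_triangle
    have h2 : G.dist y x ≤ 1 := by
      have := SimpleGraph.dist_le (hadj.symm.toWalk)
      simpa using this
    omega
  exact ⟨y, hadj, by omega⟩

lemma claimA (hT : G.IsTree) :
    ∀ {x y : W} (p : G.Walk x y), p.IsPath → x ≠ r → 0 < p.length →
    (∀ z, G.Adj x z → G.dist r z < G.dist r x → z ∉ p.support) →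
    G.dist r x < G.dist r y := by
  intro x y p
  induction p with
  | nil => intro _ _ h0 _; simp at h0
  | @cons x c y h q ih =>
    intro hp hxr _ hz
    have hc : G.Connected := hT.isConnected
    have hcsup : c ∈ (SimpleGraph.Walk.cons h q).support := by
      simp [SimpleGraph.Walk.support_cons, SimpleGraph.Walk.start_mem_support]
    have hnotdec : ¬ G.dist r c < G.dist r x := fun hlt => hz c h hlt hcsup
    have hne := adj_dist_ne (r := r) hT h
    have htri : G.dist r c ≤ G.dist r x + 1 := by
      have h1 : G.dist r c ≤ G.dist r x + G.dist x c := hc.dist_triangle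
      have h2 : G.dist x c ≤ 1 := by
        have := SimpleGraph.dist_le (h.toWalk)
        simpa using this
      omega
    have hdc : G.dist r c = G.dist r x + 1 := by omega
    have hcr : c ≠ r := by
      intro hcr
      rw [hcr] at hdc
      simp [SimpleGraph.dist_self] at hdc
    by_cases hq0 : q.length = 0
    · have hcy : c = y := SimpleGraph.Walk.eq_of_length_eq_zero hq0
      rw [← hcy]
      omega
    · have hqpath : q.IsPath := ((SimpleGraph.Walk.cons_isPath_iff _ _).1 hp).1
      have hxq : x ∉ q.support := ((SimpleGraph.Walk.cons_isPath_iff _ _).1 hp).2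
      have hstep : ∀ z, G.Adj c z → G.dist r z < G.dist r c → z ∉ q.support := by
        intro z hadj hlt hmem
        have hxdec : G.dist r x < G.dist r c := by omega
        have hzx : z = x := dec_neighbor_unique (r := r) hT hadj h.symm hlt hxdec
        exact hxq (hzx ▸ hmem)
      have := ih hqpath hcr (by omega) hstep
      omega

lemma induce_walk_support (S : Set W) {x y : ↥S} (w : (G.induce S).Walk x y) :
    ∃ p : G.Walk x.1 y.1, ∀ a ∈ p.support, a ∈ S := by
  induction w with
  | nil =>
    refine ⟨SimpleGraph.Walk.nil, ?_⟩
    intro a ha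
    simp only [SimpleGraph.Walk.support_nil, List.mem_singleton] at ha
    exact ha ▸ Subtype.prop _
  | @cons u b y h q ih =>
    obtain ⟨p, hp⟩ := ih
    have hadj : G.Adj u.1 b.1 := h
    refine ⟨SimpleGraph.Walk.cons hadj p, ?_⟩
    intro a ha
    rw [SimpleGraph.Walk.support_cons, List.mem_cons] at ha
    rcases ha with rfl | ha
    · exact Subtype.prop _
    · exact hp a ha

lemma up_lemma (hT : G.IsTree) (S : Set W) (hpre : (G.induce S).Preconnected)
    {x y z : W} (hx : x ∈ S) (hy : y ∈ S) (hxy : y ≠ x)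
    (hd : G.dist r y ≤ G.dist r x) (hz : G.Adj x z) (hdz : G.dist r z < G.dist r x) :
    z ∈ S := by
  by_contra hzS
  have hxr : x ≠ r := by
    intro hh
    rw [hh] at hdz
    simp [SimpleGraph.dist_self] at hdz
  obtain ⟨w⟩ := hpre ⟨x, hx⟩ ⟨y, hy⟩
  obtain ⟨p0, hp0⟩ := induce_walk_support S w
  have hsupp : ∀ a ∈ (p0.toPath : G.Walk x y).support, a ∈ S :=
    fun a ha => hp0 a (SimpleGraph.Walk.support_toPath_subset p0 ha)
  have hlen : 0 < (p0.toPath : G.Walk x y).length := by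
    rcases Nat.eq_zero_or_pos (p0.toPath : G.Walk x y).length with h0 | h0
    · exact absurd (SimpleGraph.Walk.eq_of_length_eq_zero h0).symm hxy
    · exact h0
  have hhyp : ∀ z', G.Adj x z' → G.dist r z' < G.dist r x →
      z' ∉ (p0.toPath : G.Walk x y).support := by
    intro z' h' hd' hmem
    have hzz : z' = z := dec_neighbor_unique (r := r) hT h' hz hd' hdz
    exact hzS (hzz ▸ hsupp z' hmem)
  have := claimA (r := r) hT (p0.toPath : G.Walk x y) p0.toPath.2 hxr hlen hhyp
  have hxx : G.dist r (⟨x, hx⟩ : ↥S).1 = G.dist r x := rfl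
  have hyy : G.dist r (⟨y, hy⟩ : ↥S).1 = G.dist r y := rfl
  omega

end TreeAux

lemma toPDec {m : ℕ} (G : SimpleGraph (Fin (m+1))) (hT : G.IsTree) (r : Fin (m+1))
    (F : Finset (Finset V)) (bag cov : Fin (m+1) → Finset V)
    (hcov : ∀ u, cov u ∈ F) (hsub : ∀ u, bag u ⊆ cov u)
    (hcover : ∀ e ∈ F, ∃ u, e ⊆ bag u)
    (hpre : ∀ v : V, (G.induce {u | v ∈ bag u}).Preconnected) :
    Nonempty (PDec V F m) := by
  classical
  have hc : G.Connected := hT.isConnected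
  set key : Fin (m+1) → ℕ := fun i => G.dist r i * (m+1) + i.val with hkeydef
  have hkeyval : ∀ i, key i = G.dist r i * (m+1) + i.val := fun i => rfl
  have keyinj : Function.Injective key := by
    intro a b h
    rw [hkeyval, hkeyval] at h
    have ha : a.val < m+1 := a.isLt
    have hb : b.val < m+1 := b.isLt
    have hmod : a.val = b.val := by
      have e1 : G.dist r a * (m+1) + a.val = (m+1) * G.dist r a + a.val := by ring
      have e2 : G.dist r b * (m+1) + b.val = (m+1) * G.dist r b + b.val := by ring
      rw [e1, e2] at h
      have h1 : ((m+1) * G.dist r a + a.val) % (m+1) = a.val := by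
        rw [Nat.mul_add_mod]
        exact Nat.mod_eq_of_lt ha
      have h2 : ((m+1) * G.dist r b + b.val) % (m+1) = b.val := by
        rw [Nat.mul_add_mod]
        exact Nat.mod_eq_of_lt hb
      rw [← h1, ← h2, h]
    exact Fin.ext hmod
  set σ := Tuple.sort key with hσdef
  have hmono : StrictMono (key ∘ σ) :=
    (Tuple.monotone_sort key).strictMono_of_injective (keyinj.comp σ.injective)
  have hdist_pos : ∀ x : Fin (m+1), x ≠ r → 0 < G.dist r x :=
    fun x hx => hc.pos_dist_of_ne (Ne.symm hx)
  have hkey_r : key r = r.val := by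
    rw [hkeyval, SimpleGraph.dist_self]
    ring
  -- the root sits at position 0
  have hr0 : σ 0 = r := by
    by_contra hne
    have h1 : key (σ 0) ≤ key r := by
      have := hmono.monotone (Fin.zero_le (σ.symm r))
      simpa [Function.comp, Equiv.apply_symm_apply] using this
    have h2 : m + 1 ≤ key (σ 0) := by
      rw [hkeyval]
      have := hdist_pos (σ 0) hne
      nlinarith [(σ 0).isLt]
    rw [hkey_r] at h1
    have := r.isLt
    omega
  -- parent function on vertices
  have parspec : ∀ x : Fin (m+1), x ≠ r →
      ∃ y, G.Adj x y ∧ G.dist r y + 1 = G.dist r x :=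
    fun x hx => dec_neighbor_exists hc hx
  set parfun : Fin (m+1) → Fin (m+1) :=
    fun x => if h : x = r then r else (parspec x h).choose with hparfun
  have parfun_spec : ∀ x (h : x ≠ r),
      G.Adj x (parfun x) ∧ G.dist r (parfun x) + 1 = G.dist r x := by
    intro x h
    rw [hparfun]
    simp only [dif_neg h]
    exact (parspec x h).choose_spec
  have hσne : ∀ k : Fin (m+1), k ≠ 0 → σ k ≠ r := by
    intro k hk he
    exact hk (by rw [← hr0] at he; exact σ.injective he)
  have keylt : ∀ {a b : Fin (m+1)}, G.dist r a < G.dist r b → key a < key b := by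
    intro a b h
    rw [hkeyval, hkeyval]
    nlinarith [a.isLt, b.isLt]
  have symmlt : ∀ {a : Fin (m+1)} {k : Fin (m+1)}, key a < key (σ k) → σ.symm a < k := by
    intro a k h
    have := hmono.lt_iff_lt (a := σ.symm a) (b := k)
    rw [Function.comp, Function.comp, Equiv.apply_symm_apply] at this
    exact this.1 h
  refine ⟨⟨fun k => σ.symm (parfun (σ k)), ?_, ?_, fun k => bag (σ k), fun k => cov (σ k),
      fun k => hcov _, fun k => hsub _, ?_, ?_⟩⟩
  · show σ.symm (parfun (σ 0)) = 0
    rw [hr0, hparfun]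
    simp only [dif_pos]
    rw [← hr0, Equiv.symm_apply_apply]
  · intro k hk
    have hx := hσne k hk
    obtain ⟨hadj, hdec⟩ := parfun_spec (σ k) hx
    show σ.symm (parfun (σ k)) < k
    exact symmlt (keylt (a := parfun (σ k)) (b := σ k) (by omega))
  · intro e he
    obtain ⟨u, hu⟩ := hcover e he
    refine ⟨σ.symm u, ?_⟩
    show e ⊆ bag (σ (σ.symm u))
    rwa [Equiv.apply_symm_apply]
  · intro v k j hvk hvj hjk
    have hvk' : v ∈ bag (σ k) := hvk
    have hvj' : v ∈ bag (σ j) := hvj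
    have hyx : σ j ≠ σ k := fun h => absurd (σ.injective h) (ne_of_lt hjk)
    have hkeyxy : key (σ j) < key (σ k) := hmono hjk
    have hdyx : G.dist r (σ j) ≤ G.dist r (σ k) := by
      by_contra hlt
      have := keylt (a := σ k) (b := σ j) (by omega)
      omega
    have hxr : σ k ≠ r := by
      intro hh
      apply hyx
      have h0 : G.dist r (σ k) = 0 := by rw [hh, SimpleGraph.dist_self]
      have h1 : G.dist r (σ j) = 0 := by omega
      have h2 : σ j = r := by
        have := hc.dist_eq_zero_iff (u := r) (v := σ j)
        exact (this.1 h1).symm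
      rw [h2, hh]
    obtain ⟨hadj, hdec⟩ := parfun_spec (σ k) hxr
    have hz : parfun (σ k) ∈ {u | v ∈ bag u} :=
      up_lemma (r := r) hT {u | v ∈ bag u} (hpre v) hvk' hvj' hyx hdyx hadj (by omega)
    show v ∈ bag (σ (σ.symm (parfun (σ k))))
    rw [Equiv.apply_symm_apply]
    exact hz

lemma hd_of_JT (H : FinHypergraph V) {m : ℕ} (E : PDec V H.edges m)
    (hE : ∀ u, E.bag u = E.cov u) :
    ∃ D : Decomp V, D.IsHD H ∧ ∀ u, (D.cover u).card ≤ 1 := by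
  refine ⟨⟨m+1, pGraph m E.par E.hpar, 0, E.bag, fun u => {E.cov u}⟩,
    ⟨⟨pGraph.isTree (hpar := E.hpar), ?_, ?_, ?_, ?_⟩, ?_⟩, ?_⟩
  · exact E.hcover
  · intro v
    exact pGraph.induce_preconnected (hpar := E.hpar) {u | v ∈ E.bag u}
      (fun i j hi hj hlt => E.hconn v i j hi hj hlt)
  · intro u
    simp only [Finset.singleton_subset_iff]
    exact E.hcov u
  · intro u
    rw [Finset.singleton_biUnion]
    exact E.hsub u
  · intro u u' _ v _ hvcov
    rw [Finset.singleton_biUnion] at hvcov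
    show v ∈ E.bag u
    rw [hE u]
    exact hvcov
  · intro u
    simp

lemma trivialHD (H : FinHypergraph V) (h : H.edges = ∅) :
    ∃ D : Decomp V, D.IsHD H ∧ ∀ u, (D.cover u).card = 0 := by
  refine ⟨⟨1, ⊥, 0, fun _ => ∅, fun _ => ∅⟩, ⟨⟨?_, ?_, ?_, ?_, ?_⟩, ?_⟩, ?_⟩
  · rw [SimpleGraph.isTree_iff]
    constructor
    · rw [SimpleGraph.connected_iff]
      refine ⟨fun a b => ?_, ⟨0⟩⟩
      rw [Fin.fin_one_eq_zero a, Fin.fin_one_eq_zero b]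
    · intro v c hc
      cases c with
      | nil => exact SimpleGraph.Walk.IsCycle.not_of_nil hc
      | cons h q => exact h
  · intro e he
    rw [h] at he
    exact absurd he (Finset.notMem_empty e)
  · intro v x y
    exact absurd x.2 (Finset.notMem_empty v)
  · intro u
    simp
  · intro u
    simp
  · intro u u' _ v hv
    exact absurd hv (Finset.notMem_empty v)
  · intro u
    simp

lemma edges_empty_of_zero (H : FinHypergraph V)
    (h : ∃ D : Decomp V, D.IsGHD H ∧ ∀ u, (D.cover u).card ≤ 0) : H.edges = ∅ := by
  obtain ⟨D, ⟨_, hcov, _, _, hbag⟩, hc⟩ := h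
  rw [Finset.eq_empty_iff_forall_notMem]
  intro e he
  obtain ⟨u, hu⟩ := hcov e he
  have h0 : D.cover u = ∅ := Finset.card_eq_zero.1 (Nat.le_zero.1 (hc u))
  have hbe : D.bag u ⊆ ∅ := by
    have := hbag u
    rwa [h0, Finset.biUnion_empty] at this
  obtain ⟨x, hx⟩ := H.nonempty_of_mem e he
  exact absurd (hbe (hu hx)) (Finset.notMem_empty x)

lemma sInf_eq_one_iff (S : Set ℕ) : sInf S = 1 ↔ 1 ∈ S ∧ 0 ∉ S := by
  constructor
  · intro h
    have hSne : S.Nonempty := by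
      by_contra h'
      rw [Set.not_nonempty_iff_eq_empty.1 h'] at h
      simp [Nat.sInf_empty] at h
    have h1 := Nat.sInf_mem hSne
    rw [h] at h1
    refine ⟨h1, fun h0 => ?_⟩
    have := Nat.sInf_le h0
    omega
  · rintro ⟨h1, h0⟩
    have hle : sInf S ≤ 1 := Nat.sInf_le h1
    have hmem := Nat.sInf_mem (⟨1, h1⟩ : S.Nonempty)
    have : sInf S ≠ 0 := fun hh => h0 (hh ▸ hmem)
    omega

/-- For every hypergraph `H`: `ghw(H) = 1` iff `hw(H) = 1`. -/
theorem ghw_eq_one_iff_hw_eq_one (H : FinHypergraph V) :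
    ghw H = 1 ↔ hw H = 1 := by
  classical
  simp only [ghw, hw]
  rw [sInf_eq_one_iff, sInf_eq_one_iff]
  constructor
  · rintro ⟨h1, h0⟩
    constructor
    · -- construct an HD of width 1 from a GHD of width 1
      obtain ⟨D, hGHD, hcard⟩ := h1
      by_cases hE : H.edges = ∅
      · obtain ⟨D', hD', hc'⟩ := trivialHD H hE
        exact ⟨D', hD', fun u => by simp [hc' u]⟩
      · have hne : H.edges.Nonempty := Finset.nonempty_iff_ne_empty.2 hE
        rcases D with ⟨n, tree, root, bagf, coverf⟩
        obtain ⟨htree, hedgecov, hpre, hcovsub, hbagsub⟩ := hGHD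
        have hpos : 0 < n := by
          have : Nonempty (Fin n) := htree.isConnected.nonempty
          exact Fin.pos_iff_nonempty.2 this
        obtain ⟨m, rfl⟩ := Nat.exists_eq_succ_of_ne_zero (Nat.pos_iff_ne_zero.1 hpos)
        have hex : ∀ u : Fin (m+1), ∃ c, c ∈ H.edges ∧ bagf u ⊆ c := by
          intro u
          by_cases hcu : (coverf u) = ∅
          · refine ⟨hne.choose, hne.choose_spec, ?_⟩
            have hb := hbagsub u
            rw [show (⟨m+1, tree, root, bagf, coverf⟩ : Decomp V).cover u = coverf u from rfl,
              hcu, Finset.biUnion_empty] at hb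
            exact hb.trans (Finset.empty_subset _)
          · obtain ⟨c, hcmem⟩ := Finset.nonempty_iff_ne_empty.2 hcu
            have hcsing : coverf u = {c} := by
              apply Finset.eq_singleton_iff_unique_mem.2
              exact ⟨hcmem, fun d hd => Finset.card_le_one.1 (hcard u) d hd c hcmem⟩
            refine ⟨c, hcovsub u hcmem, ?_⟩
            have hb := hbagsub u
            rwa [show (⟨m+1, tree, root, bagf, coverf⟩ : Decomp V).cover u = coverf u from rfl,
              hcsing, Finset.singleton_biUnion] at hb
        obtain ⟨E0⟩ := toPDec tree htree root H.edges bagf (fun u => (hex u).choose)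
          (fun u => (hex u).choose_spec.1) (fun u => (hex u).choose_spec.2) hedgecov hpre
        obtain ⟨m', E, hEjt⟩ := PDec.exists_JT (m + 1 + H.edges.card + 1) H.edges m E0 hne
          (by omega)
        obtain ⟨D', hHD, hc⟩ := hd_of_JT H E hEjt
        exact ⟨D', hHD, hc⟩
    · intro h0H
      obtain ⟨D, hHD, hc⟩ := h0H
      exact h0 ⟨D, hHD.1, hc⟩
  · rintro ⟨h1, h0⟩
    constructor
    · obtain ⟨D, hHD, hc⟩ := h1
      exact ⟨D, hHD.1, hc⟩
    · intro h0G
      have hE := edges_empty_of_zero H h0G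
      obtain ⟨D', hD', hc'⟩ := trivialHD H hE
      exact h0 ⟨D', hD', fun u => le_of_eq (hc' u)⟩
end

section
/- Gluing lemma for GHDs: Let H be a hypergraph, k ≥ 1, and B ⊆ V(H) such that there exists λ: E(H) → {0,1} with weight(λ) ≤ k and B ⊆ B(λ). Let C_1, …, C_ℓ be the connected components of the subhypergraph of H induced on V(H) \ B, and for each i set E_i = {e ∈ E(H) : e ∩ C_i ≠ ∅}, V_i = B ∪ ⋃_{e ∈ E_i} e, and H_i = (V_i, E_i ∪ {B}). Suppose that for each i the hypergraph H_i has a GHD D_i of width ≤ k containing a leaf node t_i with bag B_{t_i} = B and λ_{t_i} assigning value 1 only to the edge B, and in which no node other than t_i assigns positive λ-value to the edge B. Then H has a GHD of width ≤ k (obtained by taking a root node u with bag B and label λ, rerooting each D_i at t_i, deleting t_i, and attaching the children of each t_i as children of u). -/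
variable {V : Type} [DecidableEq V]

/-- Connectivity in the subhypergraph of `H` induced on the vertex set `W`:
`x` and `y` are joined by a path each of whose steps stays in `W` and is witnessed by an
edge of `H` containing both endpoints. -/
def HConn (H : FinHypergraph V) (W : Finset V) : V → V → Prop :=
  Relation.ReflTransGen (fun a b => a ∈ W ∧ b ∈ W ∧ ∃ e ∈ H.edges, a ∈ e ∧ b ∈ e)

/-- `C` is a connected component of the subhypergraph of `H` induced on `W`:
a maximal nonempty set of vertices of `W` that are pairwise connected within `W`. -/
def IsComponent (H : FinHypergraph V) (W : Finset V) (C : Finset V) : Prop :=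
  C.Nonempty ∧ C ⊆ W ∧
  (∀ x ∈ C, ∀ y ∈ C, HConn H W x y) ∧
  (∀ x ∈ C, ∀ y ∈ W, HConn H W x y → y ∈ C)


namespace GlueAux

open SimpleGraph

variable {m n : ℕ}

lemma castAdd_ne_natAdd (a : Fin m) (b : Fin n) :
    Fin.castAdd n a ≠ Fin.natAdd m b := by
  intro h
  have := congrArg Fin.val h
  simp [Fin.castAdd, Fin.natAdd] at this
  omega

lemma castAdd_inj {a b : Fin m} (h : Fin.castAdd n a = Fin.castAdd n b) : a = b := by
  rw [Fin.ext_iff] at h ⊢; simpa using h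

lemma natAdd_inj {a b : Fin n} (h : Fin.natAdd m a = Fin.natAdd m b) : a = b := by
  have := congrArg Fin.val h
  simp [Fin.natAdd] at this
  exact Fin.ext this

lemma fin_cases' (i : Fin (m + n)) :
    (∃ a : Fin m, i = Fin.castAdd n a) ∨ (∃ b : Fin n, i = Fin.natAdd m b) := by
  rcases lt_or_ge i.1 m with h | h
  · exact Or.inl ⟨⟨i.1, h⟩, Fin.ext rfl⟩
  · exact Or.inr ⟨⟨i.1 - m, by omega⟩, Fin.ext (by simp [Fin.natAdd]; omega)⟩

/-- Glue two graphs by one edge between `r` and `t`. -/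
def glue (Gp : SimpleGraph (Fin m)) (Gc : SimpleGraph (Fin n)) (r : Fin m) (t : Fin n) :
    SimpleGraph (Fin (m + n)) where
  Adj i j :=
    (∃ a b, Gp.Adj a b ∧ i = Fin.castAdd n a ∧ j = Fin.castAdd n b) ∨
    (∃ a b, Gc.Adj a b ∧ i = Fin.natAdd m a ∧ j = Fin.natAdd m b) ∨
    (i = Fin.castAdd n r ∧ j = Fin.natAdd m t) ∨
    (i = Fin.natAdd m t ∧ j = Fin.castAdd n r)
  symm := by
    refine ⟨?_⟩
    rintro i j (⟨a, b, h, rfl, rfl⟩ | ⟨a, b, h, rfl, rfl⟩ | ⟨rfl, rfl⟩ | ⟨rfl, rfl⟩)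
    · exact Or.inl ⟨b, a, h.symm, rfl, rfl⟩
    · exact Or.inr (Or.inl ⟨b, a, h.symm, rfl, rfl⟩)
    · exact Or.inr (Or.inr (Or.inr ⟨rfl, rfl⟩))
    · exact Or.inr (Or.inr (Or.inl ⟨rfl, rfl⟩))
  loopless := by
    refine ⟨?_⟩
    rintro i (⟨a, b, h, rfl, h2⟩ | ⟨a, b, h, rfl, h2⟩ | ⟨rfl, h2⟩ | ⟨rfl, h2⟩)
    · exact h.ne (castAdd_inj h2)
    · exact h.ne (natAdd_inj h2)
    · exact castAdd_ne_natAdd r t h2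
    · exact castAdd_ne_natAdd r t h2.symm

variable {Gp : SimpleGraph (Fin m)} {Gc : SimpleGraph (Fin n)} {r : Fin m} {t : Fin n}

/-- The left inclusion as a graph homomorphism. -/
def leftHom : Gp →g glue Gp Gc r t :=
  ⟨Fin.castAdd n, fun h => Or.inl ⟨_, _, h, rfl, rfl⟩⟩

/-- The right inclusion as a graph homomorphism. -/
def rightHom : Gc →g glue Gp Gc r t :=
  ⟨Fin.natAdd m, fun h => Or.inr (Or.inl ⟨_, _, h, rfl, rfl⟩)⟩

lemma glue_connected (hp : Gp.Connected) (hc : Gc.Connected) :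
    (glue Gp Gc r t).Connected := by
  have key : ∀ i, (glue Gp Gc r t).Reachable (Fin.castAdd n r) i := by
    intro i
    rcases fin_cases' i with ⟨a, rfl⟩ | ⟨b, rfl⟩
    · exact (hp r a).map (leftHom (Gc := Gc) (t := t))
    · refine (Adj.reachable ?_).trans ((hc t b).map (rightHom (Gp := Gp) (r := r)))
      exact Or.inr (Or.inr (Or.inl ⟨rfl, rfl⟩))
  haveI : Nonempty (Fin (m + n)) := ⟨Fin.castAdd n r⟩
  exact ⟨fun i j => (key i).symm.trans (key j)⟩

/-- Project reachability along a map that sends each edge to an edge or collapses it. -/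
lemma reach_proj {α β : Type*} {K : SimpleGraph α} {G' : SimpleGraph β} (f : α → β)
    (hf : ∀ x y, K.Adj x y → f x = f y ∨ G'.Adj (f x) (f y)) {x y : α}
    (h : K.Reachable x y) : G'.Reachable (f x) (f y) := by
  rw [reachable_iff_reflTransGen] at h
  induction h with
  | refl => exact Reachable.refl _
  | tail _ hadj ih =>
    rcases hf _ _ hadj with he | ha
    · exact he ▸ ih
    · exact ih.trans ha.reachable

def projL (r : Fin m) (i : Fin (m + n)) : Fin m :=
  if h : i.1 < m then ⟨i.1, h⟩ else r

def projR (t : Fin n) (i : Fin (m + n)) : Fin n :=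
  if h : m ≤ i.1 then ⟨i.1 - m, by omega⟩ else t

@[simp] lemma projL_castAdd (r : Fin m) (a : Fin m) : projL (n := n) r (Fin.castAdd n a) = a := by
  unfold projL
  rw [dif_pos (by simp : ((Fin.castAdd n a).1 < m))]
  exact Fin.ext (by simp)

@[simp] lemma projL_natAdd (r : Fin m) (b : Fin n) : projL r (Fin.natAdd m b) = r := by
  unfold projL
  rw [dif_neg (by simp)]

@[simp] lemma projR_castAdd (t : Fin n) (a : Fin m) : projR (m := m) t (Fin.castAdd n a) = t := by
  unfold projR
  rw [dif_neg (by simp)]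

@[simp] lemma projR_natAdd (t : Fin n) (b : Fin n) : projR t (Fin.natAdd m b) = b := by
  unfold projR
  rw [dif_pos (by simp : (m ≤ (Fin.natAdd m b).1))]
  exact Fin.ext (by simp)

def side (i : Fin (m + n)) : Bool := decide (i.1 < m)

@[simp] lemma side_castAdd (a : Fin m) : side (n := n) (Fin.castAdd n a) = true := by
  simp [side, Fin.castAdd, Fin.is_lt]

@[simp] lemma side_natAdd (b : Fin n) : side (m := m) (Fin.natAdd m b) = false := by
  simp [side, Fin.natAdd]

lemma sym2_map_ne {α β : Type*} {f : α → β} (hf : Function.Injective f) {a b c d : α}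
    (h : s(a, b) ≠ s(c, d)) : s(f a, f b) ≠ s(f c, f d) := by
  intro he
  apply h
  rw [Sym2.eq_iff] at he ⊢
  rcases he with ⟨h1, h2⟩ | ⟨h1, h2⟩
  · exact Or.inl ⟨hf h1, hf h2⟩
  · exact Or.inr ⟨hf h1, hf h2⟩

lemma glue_isTree (hp : Gp.IsTree) (hc : Gc.IsTree) : (glue Gp Gc r t).IsTree := by
  refine ⟨glue_connected hp.isConnected hc.isConnected, ?_⟩
  rw [isAcyclic_iff_forall_adj_isBridge]
  rintro i j hij
  rw [isBridge_iff]
  intro hreach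
  rcases hij with ⟨a, b, hab, rfl, rfl⟩ | ⟨a, b, hab, rfl, rfl⟩ | ⟨rfl, rfl⟩ | ⟨rfl, rfl⟩
  · -- edge inside Gp
    have hbr := (isAcyclic_iff_forall_adj_isBridge.mp hp.IsAcyclic) hab
    refine isBridge_iff.mp hbr ?_
    have hproj := reach_proj (K := (glue Gp Gc r t) \ fromEdgeSet {s(Fin.castAdd n a, Fin.castAdd n b)})
      (G' := Gp \ fromEdgeSet {s(a, b)}) (projL r) ?_ hreach
    · simp at hproj; exact hproj
    · rintro x y ⟨hadj, hne⟩
      simp only [fromEdgeSet_adj, Set.mem_singleton_iff, not_and] at hne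
      have hnexy : s(x, y) ≠ s(Fin.castAdd n a, Fin.castAdd n b) :=
        fun h => hne h ((glue Gp Gc r t).ne_of_adj hadj)
      rcases hadj with ⟨c, d, hcd, rfl, rfl⟩ | ⟨c, d, hcd, rfl, rfl⟩ | ⟨rfl, rfl⟩ | ⟨rfl, rfl⟩
      · right
        simp only [projL_castAdd]
        refine ⟨hcd, ?_⟩
        simp only [fromEdgeSet_adj, Set.mem_singleton_iff, not_and]
        intro h _
        exact hnexy (by
          rw [Sym2.eq_iff] at h ⊢
          rcases h with ⟨rfl, rfl⟩ | ⟨rfl, rfl⟩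
          · exact Or.inl ⟨rfl, rfl⟩
          · exact Or.inr ⟨rfl, rfl⟩)
      · left; simp
      · left; simp
      · left; simp
  · -- edge inside Gc
    have hbr := (isAcyclic_iff_forall_adj_isBridge.mp hc.IsAcyclic) hab
    refine isBridge_iff.mp hbr ?_
    have hproj := reach_proj (K := (glue Gp Gc r t) \ fromEdgeSet {s(Fin.natAdd m a, Fin.natAdd m b)})
      (G' := Gc \ fromEdgeSet {s(a, b)}) (projR t) ?_ hreach
    · simp at hproj; exact hproj
    · rintro x y ⟨hadj, hne⟩
      simp only [fromEdgeSet_adj, Set.mem_singleton_iff, not_and] at hne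
      have hnexy : s(x, y) ≠ s(Fin.natAdd m a, Fin.natAdd m b) :=
        fun h => hne h ((glue Gp Gc r t).ne_of_adj hadj)
      rcases hadj with ⟨c, d, hcd, rfl, rfl⟩ | ⟨c, d, hcd, rfl, rfl⟩ | ⟨rfl, rfl⟩ | ⟨rfl, rfl⟩
      · left; simp
      · right
        simp only [projR_natAdd]
        refine ⟨hcd, ?_⟩
        simp only [fromEdgeSet_adj, Set.mem_singleton_iff, not_and]
        intro h _
        exact hnexy (by
          rw [Sym2.eq_iff] at h ⊢
          rcases h with ⟨rfl, rfl⟩ | ⟨rfl, rfl⟩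
          · exact Or.inl ⟨rfl, rfl⟩
          · exact Or.inr ⟨rfl, rfl⟩)
      · left; simp
      · left; simp
  · -- the glue edge
    have hproj := reach_proj (K := (glue Gp Gc r t) \ fromEdgeSet {s(Fin.castAdd n r, Fin.natAdd m t)})
      (G' := (⊥ : SimpleGraph Bool)) side ?_ hreach
    · rw [reachable_bot] at hproj
      simp at hproj
    · rintro x y ⟨hadj, hne⟩
      simp only [fromEdgeSet_adj, Set.mem_singleton_iff, not_and] at hne
      have hnexy : s(x, y) ≠ s(Fin.castAdd n r, Fin.natAdd m t) :=
        fun h => hne h ((glue Gp Gc r t).ne_of_adj hadj)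
      rcases hadj with ⟨c, d, hcd, rfl, rfl⟩ | ⟨c, d, hcd, rfl, rfl⟩ | ⟨rfl, rfl⟩ | ⟨rfl, rfl⟩
      · left; simp
      · left; simp
      · exact absurd rfl hnexy
      · exact absurd Sym2.eq_swap hnexy
  · -- the glue edge, reversed
    have hproj := reach_proj (K := (glue Gp Gc r t) \ fromEdgeSet {s(Fin.natAdd m t, Fin.castAdd n r)})
      (G' := (⊥ : SimpleGraph Bool)) side ?_ hreach
    · rw [reachable_bot] at hproj
      simp at hproj
    · rintro x y ⟨hadj, hne⟩
      simp only [fromEdgeSet_adj, Set.mem_singleton_iff, not_and] at hne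
      have hnexy : s(x, y) ≠ s(Fin.natAdd m t, Fin.castAdd n r) :=
        fun h => hne h ((glue Gp Gc r t).ne_of_adj hadj)
      rcases hadj with ⟨c, d, hcd, rfl, rfl⟩ | ⟨c, d, hcd, rfl, rfl⟩ | ⟨rfl, rfl⟩ | ⟨rfl, rfl⟩
      · left; simp
      · left; simp
      · exact absurd Sym2.eq_swap hnexy
      · exact absurd rfl hnexy

/-- A graph homomorphism between induced subgraphs. -/
def induceHom' {α β : Type*} {G : SimpleGraph α} {G' : SimpleGraph β} (f : G →g G')
    {S : Set α} {S' : Set β} (hS : ∀ a ∈ S, f a ∈ S') :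
    (G.induce S) →g (G'.induce S') where
  toFun a := ⟨f a.1, hS _ a.2⟩
  map_rel' h := f.map_rel h

end GlueAux

section Main

open Finset

variable {V : Type} [DecidableEq V]

/-- Gluing lemma for GHDs: if `B ⊆ V(H)` is covered by at most `k` edges and, for every
connected component `C` of the subhypergraph induced on `V(H) \ B`, the hypergraph
`H_C = (B ∪ ⋃{e : e ∩ C ≠ ∅}, {e : e ∩ C ≠ ∅} ∪ {B})` has a GHD of width `≤ k` with a
leaf node `t` whose bag is `B`, whose label is exactly `{B}`, and such that no other node
uses the edge `B`, then `H` has a GHD of width `≤ k`. -/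
theorem ghd_gluing (H : FinHypergraph V) (k : ℕ) (hk : 1 ≤ k)
    (B : Finset V) (hBV : B ⊆ H.verts) (hBne : B.Nonempty)
    (hcov : ∃ L : Finset (Finset V), L ⊆ H.edges ∧ L.card ≤ k ∧ B ⊆ L.biUnion id)
    (hrec : ∀ C : Finset V, IsComponent H (H.verts \ B) C →
      ∀ H' : FinHypergraph V,
        H'.verts = B ∪ (H.edges.filter fun e => (e ∩ C).Nonempty).biUnion id →
        H'.edges = insert B (H.edges.filter fun e => (e ∩ C).Nonempty) →
        ∃ D : Decomp V, D.IsGHD H' ∧ (∀ u, (D.cover u).card ≤ k) ∧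
          ∃ t : Fin D.n,
            (∀ w w', D.tree.Adj t w → D.tree.Adj t w' → w = w') ∧
            D.bag t = B ∧ D.cover t = {B} ∧
            (∀ u, u ≠ t → B ∉ D.cover u)) :
    ∃ D : Decomp V, D.IsGHD H ∧ ∀ u, (D.cover u).card ≤ k := by
  classical
  obtain ⟨L, hL1, hL2, hL3⟩ := hcov
  set W : Finset V := H.verts \ B with hW
  -- symmetry of connectivity
  have hsymm : ∀ {x y : V}, HConn H W x y → HConn H W y x := by
    intro x y h
    refine (@Relation.ReflTransGen.stdSymm _ _ ⟨?_⟩).symm _ _ h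
    rintro a b ⟨h1, h2, e, he, ha, hb⟩
    exact ⟨h2, h1, e, he, hb, ha⟩
  -- components
  let Cf : V → Finset V := fun v => W.filter fun y => HConn H W v y
  have hCf_mem : ∀ {v : V}, v ∈ W → v ∈ Cf v := by
    intro v hv
    exact Finset.mem_filter.mpr ⟨hv, Relation.ReflTransGen.refl⟩
  have hCf_comp : ∀ v ∈ W, IsComponent H W (Cf v) := by
    intro v hv
    refine ⟨⟨v, hCf_mem hv⟩, Finset.filter_subset _ _, ?_, ?_⟩
    · intro x hx y hy
      exact (hsymm (Finset.mem_filter.mp hx).2).trans (Finset.mem_filter.mp hy).2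
    · intro x hx y hy hxy
      exact Finset.mem_filter.mpr ⟨hy, (Finset.mem_filter.mp hx).2.trans hxy⟩
  have comp_unique : ∀ C1 C2 : Finset V, IsComponent H W C1 → IsComponent H W C2 →
      ∀ v, v ∈ C1 → v ∈ C2 → C1 = C2 := by
    have key : ∀ C1 C2 : Finset V, IsComponent H W C1 → IsComponent H W C2 →
        ∀ v, v ∈ C1 → v ∈ C2 → C1 ⊆ C2 := by
      intro C1 C2 h1 h2 v hv1 hv2 x hx
      exact h2.2.2.2 v hv2 x (h1.2.1 hx) (h1.2.2.1 v hv1 x hx)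
    intro C1 C2 h1 h2 v hv1 hv2
    exact Finset.Subset.antisymm (key C1 C2 h1 h2 v hv1 hv2) (key C2 C1 h2 h1 v hv2 hv1)
  set comps : Finset (Finset V) := W.image Cf with hcomps
  have hcomps_comp : ∀ C ∈ comps, IsComponent H W C := by
    intro C hC
    obtain ⟨v, hv, rfl⟩ := Finset.mem_image.mp hC
    exact hCf_comp v hv
  -- the local hypergraphs
  let F : Finset V → Finset (Finset V) := fun C => H.edges.filter fun e => (e ∩ C).Nonempty
  let HC : Finset V → FinHypergraph V := fun C =>
    { verts := B ∪ (F C).biUnion id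
      edges := insert B (F C)
      nonempty_of_mem := by
        intro e he
        rcases Finset.mem_insert.mp he with rfl | he
        · exact hBne
        · exact H.nonempty_of_mem e (Finset.mem_filter.mp he).1
      subset_verts := by
        intro e he
        rcases Finset.mem_insert.mp he with rfl | he
        · exact Finset.subset_union_left
        · exact (Finset.subset_biUnion_of_mem id he).trans Finset.subset_union_right }
  -- locality: any vertex of a bag of a GHD of `HC C` not in `B` lies in `C`
  have hlocal : ∀ C ∈ comps, ∀ DC : Decomp V, DC.IsGHD (HC C) →
      ∀ u v, v ∈ DC.bag u → v ∉ B → v ∈ C := by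
    intro C hC DC hGHD u v hv hvB
    have h1 := hGHD.2.2.2.2 u hv
    obtain ⟨e, he, hve⟩ := Finset.mem_biUnion.mp h1
    have he' := hGHD.2.2.2.1 u he
    rcases Finset.mem_insert.mp he' with rfl | he'
    · exact absurd hve hvB
    · obtain ⟨heH, heC⟩ := Finset.mem_filter.mp he'
      obtain ⟨y, hy⟩ := heC
      have hyC : y ∈ C := (Finset.mem_inter.mp hy).2
      have hye : y ∈ e := (Finset.mem_inter.mp hy).1
      have hvW : v ∈ W := Finset.mem_sdiff.mpr ⟨H.subset_verts e heH hve, hvB⟩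
      have hyW : y ∈ W := (hcomps_comp C hC).2.1 hyC
      have hstep : HConn H W y v :=
        Relation.ReflTransGen.single ⟨hyW, hvW, e, heH, hye, hve⟩
      exact (hcomps_comp C hC).2.2.2 y hyC v hvW hstep
  -- decompositions of the local hypergraphs
  have spec : ∀ C ∈ comps, ∃ D : Decomp V, D.IsGHD (HC C) ∧ (∀ u, (D.cover u).card ≤ k) ∧
      ∃ t : Fin D.n, D.bag t = B ∧ D.cover t = {B} ∧ (∀ u, u ≠ t → B ∉ D.cover u) := by
    intro C hC
    obtain ⟨D, h1, h2, t, _, h4, h5, h6⟩ := hrec C (hcomps_comp C hC) (HC C) rfl rfl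
    exact ⟨D, h1, h2, t, h4, h5, h6⟩
  -- main induction: glue the decompositions of the components in `S`
  have main : ∀ S : Finset (Finset V), S ⊆ comps → ∃ D : Decomp V,
      D.tree.IsTree ∧ D.bag D.root = B ∧
      (∀ u, D.cover u ⊆ H.edges) ∧ (∀ u, (D.cover u).card ≤ k) ∧
      (∀ u, D.bag u ⊆ (D.cover u).biUnion id) ∧
      (∀ e ∈ H.edges, (e ⊆ B ∨ ∃ C ∈ S, (e ∩ C).Nonempty) → ∃ u, e ⊆ D.bag u) ∧
      (∀ v : V, (D.tree.induce {u | v ∈ D.bag u}).Preconnected) ∧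
      (∀ v u, v ∈ D.bag u → v ∉ B → ∃ C ∈ S, v ∈ C) := by
    intro S
    induction S using Finset.induction_on with
    | empty =>
      intro _
      refine ⟨⟨1, ⊥, 0, fun _ => B, fun _ => L⟩, ?_, rfl, fun _ => hL1, fun _ => hL2,
        fun _ => hL3, ?_, ?_, ?_⟩
      · constructor
        · haveI : Nonempty (Fin 1) := ⟨(0 : Fin 1)⟩
          exact ⟨fun a b => by rw [Subsingleton.elim a b]⟩
        · exact SimpleGraph.isAcyclic_bot
      · intro e _ h
        rcases h with h | ⟨C, hC, _⟩
        · exact ⟨0, h⟩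
        · exact absurd hC (Finset.notMem_empty C)
      · intro v x y
        have : x = y := Subtype.ext (Subsingleton.elim _ _)
        rw [this]
      · intro v u hv hvB
        exact absurd hv hvB
    | @insert C S hCS ih =>
      intro hsub
      have hC : C ∈ comps := hsub (Finset.mem_insert_self _ _)
      have hS : S ⊆ comps := fun x hx => hsub (Finset.mem_insert_of_mem hx)
      obtain ⟨Dp, ip1, ip2, ip3, ip4, ip5, ip6, ip7, ip8⟩ := ih hS
      obtain ⟨Dc, hGHD, hcard, t, hbagt, hcovt, hnotB⟩ := spec C hC
      refine ⟨⟨Dp.n + Dc.n, GlueAux.glue Dp.tree Dc.tree Dp.root t,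
        Fin.castAdd Dc.n Dp.root, Fin.addCases Dp.bag Dc.bag,
        Fin.addCases Dp.cover (fun u => if u = t then L else Dc.cover u)⟩,
        ?_, ?_, ?_, ?_, ?_, ?_, ?_, ?_⟩
      · exact GlueAux.glue_isTree ip1 hGHD.1
      · simpa using ip2
      · intro u
        refine Fin.addCases (fun a => ?_) (fun b => ?_) u
        · simpa using ip3 a
        · simp only [Fin.addCases_right]
          by_cases hb : b = t
          · simpa [hb] using hL1
          · simp only [if_neg hb]
            intro e he
            have he' := hGHD.2.2.2.1 b he
            rcases Finset.mem_insert.mp he' with rfl | he'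
            · exact absurd he (hnotB b hb)
            · exact (Finset.mem_filter.mp he').1
      · intro u
        refine Fin.addCases (fun a => ?_) (fun b => ?_) u
        · simpa using ip4 a
        · simp only [Fin.addCases_right]
          by_cases hb : b = t
          · simpa [hb] using hL2
          · simpa [if_neg hb] using hcard b
      · intro u
        refine Fin.addCases (fun a => ?_) (fun b => ?_) u
        · simpa using ip5 a
        · simp only [Fin.addCases_left, Fin.addCases_right]
          by_cases hb : b = t
          · subst hb
            simpa [hbagt] using hL3
          · simpa [if_neg hb] using hGHD.2.2.2.2 b
      · intro e he hcase
        rcases hcase with hcase | ⟨C', hC', hne⟩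
        · obtain ⟨u, hu⟩ := ip6 e he (Or.inl hcase)
          exact ⟨Fin.castAdd Dc.n u, by simpa using hu⟩
        · rcases Finset.mem_insert.mp hC' with rfl | hC'
          · have heC : e ∈ (HC C').edges :=
              Finset.mem_insert.mpr (Or.inr (Finset.mem_filter.mpr ⟨he, hne⟩))
            obtain ⟨u, hu⟩ := hGHD.2.1 e heC
            exact ⟨Fin.natAdd Dp.n u, by simpa using hu⟩
          · obtain ⟨u, hu⟩ := ip6 e he (Or.inr ⟨C', hC', hne⟩)
            exact ⟨Fin.castAdd Dc.n u, by simpa using hu⟩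
      · -- connectivity
        intro v
        set Sv : Set (Fin (Dp.n + Dc.n)) :=
          {u | v ∈ Fin.addCases (motive := fun _ => Finset V) Dp.bag Dc.bag u} with hSv
        have memL : ∀ a : Fin Dp.n, v ∈ Dp.bag a → Fin.castAdd Dc.n a ∈ Sv := by
          intro a ha; simpa [hSv] using ha
        have memR : ∀ b : Fin Dc.n, v ∈ Dc.bag b → Fin.natAdd Dp.n b ∈ Sv := by
          intro b hb; simpa [hSv] using hb
        have memL' : ∀ a : Fin Dp.n, Fin.castAdd Dc.n a ∈ Sv → v ∈ Dp.bag a := by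
          intro a ha; simpa [hSv] using ha
        have memR' : ∀ b : Fin Dc.n, Fin.natAdd Dp.n b ∈ Sv → v ∈ Dc.bag b := by
          intro b hb; simpa [hSv] using hb
        have reachL : ∀ (a b : Fin Dp.n) (ha : v ∈ Dp.bag a) (hb : v ∈ Dp.bag b),
            ((GlueAux.glue Dp.tree Dc.tree Dp.root t).induce Sv).Reachable
              ⟨Fin.castAdd Dc.n a, memL a ha⟩ ⟨Fin.castAdd Dc.n b, memL b hb⟩ := by
          intro a b ha hb
          have h0 := (ip7 v) ⟨a, ha⟩ ⟨b, hb⟩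
          exact h0.map (GlueAux.induceHom' GlueAux.leftHom (fun u hu => memL u hu))
        have reachR : ∀ (a b : Fin Dc.n) (ha : v ∈ Dc.bag a) (hb : v ∈ Dc.bag b),
            ((GlueAux.glue Dp.tree Dc.tree Dp.root t).induce Sv).Reachable
              ⟨Fin.natAdd Dp.n a, memR a ha⟩ ⟨Fin.natAdd Dp.n b, memR b hb⟩ := by
          intro a b ha hb
          have h0 := (hGHD.2.2.1 v) ⟨a, ha⟩ ⟨b, hb⟩
          exact h0.map (GlueAux.induceHom' GlueAux.rightHom (fun u hu => memR u hu))
        intro x y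
        by_cases hvB : v ∈ B
        · -- go through the root and `t`
          have hroot : v ∈ Dp.bag Dp.root := ip2 ▸ hvB
          have ht : v ∈ Dc.bag t := hbagt ▸ hvB
          have hstep : ((GlueAux.glue Dp.tree Dc.tree Dp.root t).induce Sv).Reachable
              ⟨Fin.castAdd Dc.n Dp.root, memL _ hroot⟩ ⟨Fin.natAdd Dp.n t, memR _ ht⟩ := by
            refine SimpleGraph.Adj.reachable ?_
            show (GlueAux.glue Dp.tree Dc.tree Dp.root t).Adj _ _
            exact Or.inr (Or.inr (Or.inl ⟨rfl, rfl⟩))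
          have key : ∀ z : Sv, ((GlueAux.glue Dp.tree Dc.tree Dp.root t).induce Sv).Reachable
              z ⟨Fin.castAdd Dc.n Dp.root, memL _ hroot⟩ := by
            rintro ⟨z, hz⟩
            rcases GlueAux.fin_cases' z with ⟨a, rfl⟩ | ⟨b, rfl⟩
            · exact reachL a Dp.root (memL' a hz) hroot
            · exact (reachR b t (memR' b hz) ht).trans hstep.symm
          exact (key x).trans (key y).symm
        · -- all nodes containing v are on one side
          have notmix : ¬ ((∃ a, v ∈ Dp.bag a) ∧ (∃ b, v ∈ Dc.bag b)) := by
            rintro ⟨⟨a, ha⟩, ⟨b, hb⟩⟩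
            obtain ⟨C', hC', hvC'⟩ := ip8 v a ha hvB
            have hvC : v ∈ C := hlocal C hC Dc hGHD b v hb hvB
            exact hCS (comp_unique C C' (hcomps_comp C hC) (hcomps_comp C' (hS hC'))
              v hvC hvC' ▸ hC')
          obtain ⟨x, hx⟩ := x
          obtain ⟨y, hy⟩ := y
          rcases GlueAux.fin_cases' x with ⟨a, rfl⟩ | ⟨a, rfl⟩ <;>
            rcases GlueAux.fin_cases' y with ⟨b, rfl⟩ | ⟨b, rfl⟩
          · exact reachL a b (memL' a hx) (memL' b hy)
          · exact absurd ⟨⟨a, memL' a hx⟩, ⟨b, memR' b hy⟩⟩ notmix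
          · exact absurd ⟨⟨b, memL' b hy⟩, ⟨a, memR' a hx⟩⟩ notmix
          · exact reachR a b (memR' a hx) (memR' b hy)
      · -- locality
        intro v u
        refine Fin.addCases (fun a => ?_) (fun b => ?_) u
        · simp only [Fin.addCases_left]
          intro hv hvB
          obtain ⟨C', hC', hvC'⟩ := ip8 v a hv hvB
          exact ⟨C', Finset.mem_insert_of_mem hC', hvC'⟩
        · simp only [Fin.addCases_right]
          intro hv hvB
          exact ⟨C, Finset.mem_insert_self _ _, hlocal C hC Dc hGHD b v hv hvB⟩
  obtain ⟨D, i1, _, i3, i4, i5, i6, i7, _⟩ := main comps (le_refl comps)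
  refine ⟨D, ⟨i1, ?_, i7, i3, i5⟩, i4⟩
  intro e he
  by_cases hcase : e ⊆ B
  · exact i6 e he (Or.inl hcase)
  · obtain ⟨v, hv, hvB⟩ := Finset.not_subset.mp hcase
    have hvW : v ∈ W := Finset.mem_sdiff.mpr ⟨H.subset_verts e he hv, hvB⟩
    refine i6 e he (Or.inr ⟨Cf v, Finset.mem_image_of_mem Cf hvW, ⟨v, ?_⟩⟩)
    exact Finset.mem_inter.mpr ⟨hv, hCf_mem hvW⟩

end Main
end

section
/- Normal-form GHDs after adding subedges: let H = (V(H), E(H)) be a hypergraph, k ≥ 1, and H' = (V(H), E(H) ∪ f(H,k)). If ghw(H) ≤ k, then H' has a GHD ⟨T, (B_u), (λ_u)⟩ of width ≤ k in which B_u = B(λ_u) holds for every node u. -/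
variable {V : Type} [DecidableEq V]

/-- The set `f(H,k)` of subedges: all nonempty subsets of sets of the form
`e ∩ (e₁ ∪ ⋯ ∪ e_j)` with `e ∈ E(H)`, `j ≤ k` and `e₁, …, e_j ∈ E(H) \ {e}`. -/
def fsub (H : FinHypergraph V) (k : ℕ) : Finset (Finset V) :=
  H.edges.biUnion fun e =>
    (((H.edges.erase e).powerset.filter fun F => F.card ≤ k).biUnion fun F =>
      (e ∩ F.biUnion id).powerset.filter fun s => s.Nonempty)

open SimpleGraph

-- L1
lemma reachable_induce_of_walk {α : Type*} {G : SimpleGraph α} {S : Set α} :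
    ∀ {a b : α} (p : G.Walk a b) (hp : ∀ x ∈ p.support, x ∈ S),
    (G.induce S).Reachable ⟨a, hp a p.start_mem_support⟩ ⟨b, hp b p.end_mem_support⟩ := by
  intro a b p
  induction p with
  | nil => intro hp; exact Reachable.refl _
  | @cons a c b h q ih =>
    intro hp
    have hq : ∀ x ∈ q.support, x ∈ S := fun x hx => hp x (by simp [hx])
    have h1 : (G.induce S).Adj ⟨a, hp a (by simp)⟩ ⟨c, hq c q.start_mem_support⟩ := by
      simpa using h
    exact h1.reachable.trans (ih hq)

-- L2
lemma exists_walk_of_induce_reachable {α : Type*} {G : SimpleGraph α} {S : Set α}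
    {a b : α} (ha : a ∈ S) (hb : b ∈ S)
    (h : (G.induce S).Reachable ⟨a, ha⟩ ⟨b, hb⟩) :
    ∃ p : G.Walk a b, ∀ x ∈ p.support, x ∈ S := by
  obtain ⟨q⟩ := h
  refine ⟨q.map (SimpleGraph.Embedding.induce S).toHom, ?_⟩
  intro x hx
  have hx2 := Eq.mp (congrArg (x ∈ ·) (Walk.support_map _ _)) hx
  obtain ⟨y, _, rfl⟩ := List.mem_map.1 hx2
  exact y.2

/-- `Z` predicate: edge `e` is in the cover of `u` and there is a walk from `u` to
a node `w` whose bag contains `e`, all along which `e` stays in the cover. -/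
def Zp (D : Decomp V) (e : Finset V) (u : Fin D.n) : Prop :=
  e ∈ D.cover u ∧ ∃ w, e ⊆ D.bag w ∧ ∃ p : D.tree.Walk u w, ∀ x ∈ p.support, e ∈ D.cover x

open Classical in
noncomputable def newCover (D : Decomp V) (u : Fin D.n) : Finset (Finset V) :=
  ((D.cover u).image fun e => if Zp D e u then e else e ∩ D.bag u).filter (·.Nonempty)

noncomputable def newD (D : Decomp V) : Decomp V where
  n := D.n
  tree := D.tree
  root := D.root
  bag := fun u => (newCover D u).biUnion id
  cover := newCover D

lemma mem_newBag {D : Decomp V} {u : Fin D.n}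
    (hb : D.bag u ⊆ (D.cover u).biUnion id) {v : V} :
    v ∈ (newCover D u).biUnion id ↔
      v ∈ D.bag u ∨ ∃ e ∈ D.cover u, Zp D e u ∧ v ∈ e := by
  classical
  simp only [Finset.mem_biUnion, newCover, Finset.mem_filter, Finset.mem_image, id]
  constructor
  · rintro ⟨s, ⟨⟨e, he, rfl⟩, -⟩, hv⟩
    by_cases hz : Zp D e u
    · rw [if_pos hz] at hv; exact Or.inr ⟨e, he, hz, hv⟩
    · rw [if_neg hz] at hv; exact Or.inl (Finset.mem_inter.1 hv).2
  · rintro (hv | ⟨e, he, hz, hv⟩)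
    · obtain ⟨e, he, hve⟩ := Finset.mem_biUnion.1 (hb hv)
      by_cases hz : Zp D e u
      · exact ⟨e, ⟨⟨e, he, by rw [if_pos hz]⟩, ⟨v, hve⟩⟩, hve⟩
      · exact ⟨e ∩ D.bag u, ⟨⟨e, he, by rw [if_neg hz]⟩, ⟨v, Finset.mem_inter.2 ⟨hve, hv⟩⟩⟩,
          Finset.mem_inter.2 ⟨hve, hv⟩⟩
    · exact ⟨if Zp D e u then e else e ∩ D.bag u, ⟨⟨e, he, rfl⟩, by rw [if_pos hz]; exact ⟨v, hv⟩⟩,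
        by rw [if_pos hz]; exact hv⟩

lemma Zp_of_support {D : Decomp V} {e : Finset V} {u w : Fin D.n}
    (hw : e ⊆ D.bag w) (p : D.tree.Walk u w)
    (hsup : ∀ x ∈ p.support, e ∈ D.cover x) : ∀ x ∈ p.support, Zp D e x :=
  fun x hx => ⟨hsup x hx, w, hw, p.dropUntil x hx,
    fun y hy => hsup y (p.support_dropUntil_subset hx hy)⟩

lemma mem_fsub_of {H : FinHypergraph V} {k : ℕ} {s e : Finset V} {F : Finset (Finset V)}
    (he : e ∈ H.edges) (hF : F ⊆ H.edges) (heF : e ∉ F) (hFk : F.card ≤ k)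
    (hs : s ⊆ e ∩ F.biUnion id) (hne : s.Nonempty) :
    s ∈ fsub H k := by
  refine Finset.mem_biUnion.2 ⟨e, he, Finset.mem_biUnion.2 ⟨F, ?_, ?_⟩⟩
  · exact Finset.mem_filter.2 ⟨Finset.mem_powerset.2
      (fun x hx => Finset.mem_erase.2 ⟨fun h => heF (h ▸ hx), hF hx⟩), hFk⟩
  · exact Finset.mem_filter.2 ⟨Finset.mem_powerset.2 hs, hne⟩

lemma fsub_subset_edge {H : FinHypergraph V} {k : ℕ} {s : Finset V} (hs : s ∈ fsub H k) :
    ∃ e ∈ H.edges, s ⊆ e := by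
  obtain ⟨e, he, hs⟩ := Finset.mem_biUnion.1 hs
  obtain ⟨F, -, hs⟩ := Finset.mem_biUnion.1 hs
  exact ⟨e, he, fun x hx => (Finset.mem_inter.1
    (Finset.mem_powerset.1 (Finset.mem_filter.1 hs).1 hx)).1⟩

noncomputable def trivDecomp (H : FinHypergraph V) : Decomp V where
  n := 1
  tree := ⊥
  root := 0
  bag := fun _ => H.edges.biUnion id
  cover := fun _ => H.edges

lemma trivDecomp_isGHD (H : FinHypergraph V) : (trivDecomp H).IsGHD H := by
  unfold Decomp.IsGHD trivDecomp
  dsimp only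
  refine ⟨⟨⟨fun a b => ?_⟩, SimpleGraph.isAcyclic_bot⟩, fun e he => ⟨0, fun x hx =>
      Finset.mem_biUnion.2 ⟨e, he, hx⟩⟩, fun v a b => ?_,
      fun u => Finset.Subset.refl _, fun u => Finset.Subset.refl _⟩
  · have : a = b := Subsingleton.elim a b
    subst this; exact Reachable.refl _
  · have : a = b := Subsingleton.elim a b
    subst this; exact Reachable.refl _

lemma exists_ghd_of_ghw_le {H : FinHypergraph V} {k : ℕ} (h : ghw H ≤ k) :
    ∃ D : Decomp V, D.IsGHD H ∧ ∀ u, (D.cover u).card ≤ k := by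
  have hne : {m | ∃ D : Decomp V, D.IsGHD H ∧ ∀ u, (D.cover u).card ≤ m}.Nonempty :=
    ⟨H.edges.card, trivDecomp H, trivDecomp_isGHD H, fun _ => le_rfl⟩
  obtain ⟨D, hD, hcard⟩ := Nat.sInf_mem hne
  exact ⟨D, hD, fun u => (hcard u).trans h⟩

/-- Normal-form GHDs after adding subedges: if `ghw(H) ≤ k` with `k ≥ 1`, then
`H' = (V(H), E(H) ∪ f(H,k))` has a GHD of width `≤ k` with `B_u = B(λ_u)` at every node. -/
theorem exists_normal_form_ghd (H : FinHypergraph V) (k : ℕ) (hk : 1 ≤ k)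
    (H' : FinHypergraph V) (hv : H'.verts = H.verts)
    (he : H'.edges = H.edges ∪ fsub H k)
    (hghw : ghw H ≤ k) :
    ∃ D : Decomp V, D.IsGHD H' ∧ (∀ u, (D.cover u).card ≤ k) ∧
      ∀ u, D.bag u = (D.cover u).biUnion id := by
  classical
  obtain ⟨D, hD, hcard⟩ := exists_ghd_of_ghw_le hghw
  have hbag : ∀ u, D.bag u ⊆ (D.cover u).biUnion id := hD.2.2.2.2
  have hSsub : ∀ (v : V) (u), v ∈ D.bag u → v ∈ (newCover D u).biUnion id :=
    fun v u h => (mem_newBag (hbag u)).2 (Or.inl h)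
  -- connectivity
  have hconn : ∀ v : V, ((newD D).tree.induce {u | v ∈ (newD D).bag u}).Preconnected := by
    intro v
    have claim : ∀ a, v ∈ (newCover D a).biUnion id →
        ∃ w, v ∈ D.bag w ∧ ∃ q : D.tree.Walk a w,
          ∀ x ∈ q.support, v ∈ (newCover D x).biUnion id := by
      intro a ha
      rcases (mem_newBag (hbag a)).1 ha with h | ⟨e, _, hz, hve⟩
      · exact ⟨a, h, Walk.nil, by intro x hx; simp at hx; subst hx; exact ha⟩
      · obtain ⟨-, w, hw, p, hsup⟩ := hz
        refine ⟨w, hw hve, p, fun x hx => ?_⟩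
        exact (mem_newBag (hbag x)).2
          (Or.inr ⟨e, (Zp_of_support hw p hsup x hx).1, Zp_of_support hw p hsup x hx, hve⟩)
    rintro ⟨a, ha⟩ ⟨b, hb2⟩
    obtain ⟨wa, hwa, qa, hqa⟩ := claim a ha
    obtain ⟨wb, hwb, qb, hqb⟩ := claim b hb2
    have hr := hD.2.2.1 v ⟨wa, hwa⟩ ⟨wb, hwb⟩
    obtain ⟨r, hrS⟩ := exists_walk_of_induce_reachable
      (S := {u | v ∈ D.bag u}) hwa hwb hr
    have hq : ∀ x ∈ (qa.append (r.append qb.reverse)).support,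
        x ∈ {u | v ∈ (newCover D u).biUnion id} := by
      intro x hx
      replace hx := Eq.mp (congrArg (x ∈ ·) (Walk.support_append qa (r.append qb.reverse))) hx
      rw [List.mem_append] at hx
      rcases hx with hx | hx
      · exact hqa x hx
      · have hx' := List.mem_of_mem_tail hx
        replace hx' := Eq.mp (congrArg (x ∈ ·) (Walk.support_append r qb.reverse)) hx'
        rw [List.mem_append] at hx'
        rcases hx' with hx' | hx'
        · exact hSsub v x (hrS x hx')
        · have := List.mem_of_mem_tail hx'
          replace this := Eq.mp (congrArg (x ∈ ·) (Walk.support_reverse qb)) this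
          rw [List.mem_reverse] at this
          exact hqb x this
    exact reachable_induce_of_walk (qa.append (r.append qb.reverse)) hq
  -- cover edges belong to H'
  have hcov : ∀ u, newCover D u ⊆ H'.edges := by
    intro u s hs
    rw [newCover, Finset.mem_filter, Finset.mem_image] at hs
    obtain ⟨⟨e, hecov, rfl⟩, hne⟩ := hs
    have heE : e ∈ H.edges := hD.2.2.2.1 u hecov
    by_cases hz : Zp D e u
    · rw [if_pos hz, he]
      exact Finset.mem_union_left _ heE
    · rw [if_neg hz] at hne ⊢
      obtain ⟨w, hw⟩ := hD.2.1 e heE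
      obtain ⟨q0⟩ := hD.1.isConnected.preconnected u w
      have hx : ∃ x ∈ (q0.toPath : D.tree.Walk u w).support, e ∉ D.cover x := by
        by_contra hcon
        push_neg at hcon
        exact hz ⟨hecov, w, hw, q0.toPath, hcon⟩
      obtain ⟨x, hxp, hxcov⟩ := hx
      have hsub : e ∩ D.bag u ⊆ D.bag x := by
        intro v hv
        obtain ⟨hve, hvb⟩ := Finset.mem_inter.1 hv
        have hr := hD.2.2.1 v ⟨u, hvb⟩ ⟨w, hw hve⟩
        obtain ⟨r, hrS⟩ := exists_walk_of_induce_reachable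
          (S := {y | v ∈ D.bag y}) hvb (hw hve) hr
        have hup : r.toPath = q0.toPath := hD.1.IsAcyclic.path_unique r.toPath q0.toPath
        have hxr : x ∈ r.support := r.support_toPath_subset (hup ▸ hxp)
        exact hrS x hxr
      rw [he]
      refine Finset.mem_union_right _
        (mem_fsub_of heE (hD.2.2.2.1 x) hxcov (hcard x) (fun v hv => ?_) hne)
      exact Finset.mem_inter.2 ⟨(Finset.mem_inter.1 hv).1, hbag x (hsub hv)⟩
  refine ⟨newD D, ⟨hD.1, ?_, hconn, hcov, fun u => Finset.Subset.refl _⟩,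
      fun u => le_trans (le_trans (Finset.card_filter_le _ _) (Finset.card_image_le)) (hcard u),
      fun u => rfl⟩
  intro e' he'
  rw [he, Finset.mem_union] at he'
  obtain ⟨e0, he0, hsub0⟩ : ∃ e0 ∈ H.edges, e' ⊆ e0 := by
    rcases he' with h | h
    · exact ⟨e', h, Finset.Subset.refl _⟩
    · exact fsub_subset_edge h
  obtain ⟨u, hu⟩ := hD.2.1 e0 he0
  exact ⟨u, fun x hx => hSsub x u (hu (hsub0 hx))⟩
end

section
/- The bounded multi-intersection property implies bounded VC-dimension: if for some c ≥ 2 the c-multi-intersection width of a hypergraph H is at most i (i.e., any c pairwise distinct edges of H intersect in at most i vertices), then the VC-dimension of H is at most i + c − 1. -/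
variable {V : Type} [DecidableEq V]

/-- `X` is shattered by the edges of `H`: every subset of `X` arises as the trace `X ∩ e`
of some edge `e` (i.e. `E(H)|_X = 2^X`). -/
def Shattered (H : FinHypergraph V) (X : Finset V) : Prop :=
  ∀ Y ⊆ X, ∃ e ∈ H.edges, X ∩ e = Y


/-- The bounded multi-intersection property implies bounded VC-dimension: if any `c`
pairwise distinct edges of `H` (with `c ≥ 2`) intersect in at most `i` vertices, then
every shattered subset of `V(H)` has cardinality at most `i + c - 1`. -/
theorem vc_dim_le_of_multi_intersection (H : FinHypergraph V) (c i : ℕ) (hc : 2 ≤ c)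
    (hmiw : ∀ es : Fin c → Finset V, (∀ t, es t ∈ H.edges) → Function.Injective es →
      (H.verts.filter fun v => ∀ t, v ∈ es t).card ≤ i) :
    ∀ X : Finset V, X ⊆ H.verts → Shattered H X → X.card ≤ i + c - 1 := by
  intro X hXv hX
  by_contra hlt
  push_neg at hlt
  obtain ⟨S, hSX, hS⟩ := Finset.exists_subset_card_eq (show i + 1 ≤ X.card by omega)
  have hRcard : c - 1 ≤ (X \ S).card := by
    rw [Finset.card_sdiff_of_subset hSX]; omega
  obtain ⟨T, hTR, hT⟩ := Finset.exists_subset_card_eq hRcard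
  have hf : ∀ t : Fin c, ∃ U ⊆ T, U.card = (t : ℕ) :=
    fun t => Finset.exists_subset_card_eq (by rw [hT]; omega)
  choose f hfT hfcard using hf
  have hdisj : ∀ t, Disjoint S (f t) := fun t =>
    Finset.disjoint_left.mpr fun v hvS hvf =>
      (Finset.mem_sdiff.mp (hTR (hfT t hvf))).2 hvS
  set Y : Fin c → Finset V := fun t => S ∪ f t with hY
  have hYX : ∀ t, Y t ⊆ X := fun t =>
    Finset.union_subset hSX ((hfT t).trans (hTR.trans Finset.sdiff_subset))
  have hYcard : ∀ t, (Y t).card = i + 1 + t := fun t => by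
    rw [hY]
    simp only
    rw [Finset.card_union_of_disjoint (hdisj t), hS, hfcard]
  have he : ∀ t : Fin c, ∃ e ∈ H.edges, X ∩ e = Y t := fun t => hX (Y t) (hYX t)
  choose es hes hesY using he
  have hinj : Function.Injective es := fun a b hab => by
    have hYab : Y a = Y b := by rw [← hesY a, ← hesY b, hab]
    have hcYab := congrArg Finset.card hYab
    rw [hYcard a, hYcard b] at hcYab
    exact Fin.eq_of_val_eq (by omega)
  have hkey := hmiw es hes hinj
  have hSsub : S ⊆ H.verts.filter fun v => ∀ t, v ∈ es t := by
    intro v hv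
    refine Finset.mem_filter.mpr ⟨hXv (hSX hv), fun t => ?_⟩
    have hvm : v ∈ X ∩ es t := by rw [hesY t]; exact Finset.mem_union_left _ hv
    exact (Finset.mem_inter.mp hvm).2
  have hle := Finset.card_le_card hSsub
  omega
end
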